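/- Consider the switching transition at time t₀ between two scalar ODEs: x' = g₋(t,x) for t < t₀ and x' = g₊(t,x) for t ≥ t₀, where x' = g₋(t,x) has an attractor–repeller pair (ã₋, r̃₋) and x' = g₊(t,x) has an attractor–repeller pair (ã₊, r̃₊), both equations concave in x (coercive, strictly concave uniformly in t). Then the switched equation has two uniformly separated bounded solutions (tracking, Case A) if ã₋(t₀) > r̃₊(t₀), exactly one bounded solution if ã₋(t₀) = r̃₊(t₀), and no bounded solutions (Case C) if ã₋(t₀) < r̃₊(t₀). -/

import Mathlib

/-- A solution of the switched equation `x' = g₋(t,x)` for `t < t₀`, `x' = g₊(t,x)` for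
`t > t₀` (Carathéodory sense: continuous, differentiable off the switching time). -/
def SwitchSol (gm gp : ℝ → ℝ → ℝ) (t₀ : ℝ) (x : ℝ → ℝ) : Prop :=
  Continuous x ∧
  (∀ t < t₀, HasDerivAt x (gm t (x t)) t) ∧
  (∀ t > t₀, HasDerivAt x (gp t (x t)) t)

open Set

/-- Core Gronwall-type monotonicity: if `f' ≤ K f` on `Ioo s T`, then `f t * exp (-K t)`
is antitone on `Icc s T`. -/
lemma gronwall_anti (f f' : ℝ → ℝ) (K s T : ℝ)
    (hc : ContinuousOn f (Icc s T))
    (hd : ∀ t ∈ Ioo s T, HasDerivAt f (f' t) t)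
    (hle : ∀ t ∈ Ioo s T, f' t ≤ K * f t) :
    AntitoneOn (fun t => f t * Real.exp (-K * t)) (Icc s T) := by
  have hderiv : ∀ t ∈ Ioo s T,
      HasDerivAt (fun t => f t * Real.exp (-K * t))
        (f' t * Real.exp (-K * t) + f t * (Real.exp (-K * t) * -K)) t := by
    intro t ht
    have he : HasDerivAt (fun t : ℝ => Real.exp (-K * t)) (Real.exp (-K * t) * -K) t := by
      simpa using ((hasDerivAt_id t).const_mul (-K)).exp
    exact (hd t ht).mul he
  apply antitoneOn_of_deriv_nonpos (convex_Icc s T)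
  · exact hc.mul (Real.continuous_exp.comp (continuous_const.mul continuous_id)).continuousOn
  · intro t ht
    rw [interior_Icc] at ht
    exact (hderiv t ht).differentiableAt.differentiableWithinAt
  · intro t ht
    rw [interior_Icc] at ht
    rw [(hderiv t ht).deriv]
    have h1 := hle t ht
    have h2 : (0:ℝ) < Real.exp (-K * t) := Real.exp_pos _
    nlinarith [h2]

lemma hasDerivAt_minsq (x : ℝ) : HasDerivAt (fun y : ℝ => (min y 0)^2) (2 * min x 0) x := by
  rcases lt_trichotomy x 0 with hx | rfl | hx
  · have hev : (fun y : ℝ => y^2) =ᶠ[nhds x] (fun y : ℝ => (min y 0)^2) := by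
      filter_upwards [Iio_mem_nhds hx] with y (hy : y < 0)
      rw [min_eq_left hy.le]
    rw [min_eq_left hx.le]
    have := hasDerivAt_pow 2 x
    simpa [mul_comm] using this.congr_of_eventuallyEq hev.symm
  · rw [min_self]
    have : HasDerivAt (fun y : ℝ => (min y 0)^2) 0 0 := by
      rw [hasDerivAt_iff_isLittleO]
      rw [Asymptotics.isLittleO_iff]
      intro c hc
      filter_upwards [Metric.ball_mem_nhds (0:ℝ) hc] with y hy
      rw [Metric.mem_ball, Real.dist_eq, sub_zero] at hy
      have h1 : |min y 0| ≤ |y| := by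
        rcases le_or_gt y 0 with h | h
        · rw [min_eq_left h]
        · rw [min_eq_right h.le]; simp [abs_nonneg]
      have : ‖(min y 0)^2‖ ≤ c * ‖y‖ := by
        rw [Real.norm_eq_abs, Real.norm_eq_abs, abs_pow]
        calc |min y 0|^2 ≤ |y| * |y| := by nlinarith [abs_nonneg (min y 0), abs_nonneg y]
          _ ≤ c * |y| := by nlinarith [abs_nonneg y]
      simpa using this
    simpa using this
  · have hev : (fun _ : ℝ => (0:ℝ)) =ᶠ[nhds x] (fun y : ℝ => (min y 0)^2) := by
      filter_upwards [Ioi_mem_nhds hx] with y (hy : 0 < y)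
      rw [min_eq_right hy.le]; norm_num
    rw [min_eq_right hx.le]
    simpa using (hasDerivAt_const x (0:ℝ)).congr_of_eventuallyEq hev.symm

/-- Forward barrier lemma: if `ψ s ≥ 0` and `ψ' ≥ K ψ` wherever `ψ < 0`, then `ψ ≥ 0` on `[s,T]`. -/
lemma barrier_fwd (ψ ψ' : ℝ → ℝ) (K s T : ℝ)
    (hc : ContinuousOn ψ (Icc s T))
    (hd : ∀ t ∈ Ioo s T, HasDerivAt ψ (ψ' t) t)
    (h : ∀ t ∈ Ioo s T, ψ t < 0 → K * ψ t ≤ ψ' t)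
    (h0 : 0 ≤ ψ s) :
    ∀ t ∈ Icc s T, 0 ≤ ψ t := by
  intro t ht
  set f : ℝ → ℝ := fun t => (min (ψ t) 0)^2 with hf
  have hfc : ContinuousOn f (Icc s T) := fun u hu =>
    (((hc u hu).min continuousWithinAt_const).pow 2)
  have hfd : ∀ u ∈ Ioo s T, HasDerivAt f (2 * min (ψ u) 0 * ψ' u) u := by
    intro u hu
    exact (hasDerivAt_minsq (ψ u)).comp u (hd u hu)
  have hfle : ∀ u ∈ Ioo s T, 2 * min (ψ u) 0 * ψ' u ≤ (2*K) * f u := by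
    intro u hu
    rcases le_or_gt 0 (ψ u) with hψ | hψ
    · rw [min_eq_right hψ]; simp [hf, min_eq_right hψ]
    · rw [min_eq_left hψ.le]
      have := h u hu hψ
      simp only [hf, min_eq_left hψ.le]
      nlinarith
  have hA := gronwall_anti f (fun u => 2 * min (ψ u) 0 * ψ' u) (2*K) s T hfc hfd hfle
  have hst : s ∈ Icc s T := ⟨le_refl s, ht.1.trans ht.2⟩
  have := hA hst ht ht.1
  dsimp only at this
  have hfs : f s = 0 := by simp [hf, min_eq_right h0]
  rw [hfs, zero_mul] at this
  have hexp : (0:ℝ) < Real.exp (-(2*K) * t) := Real.exp_pos _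
  have hf0 : f t ≤ 0 := by
    by_contra hcon
    push_neg at hcon
    nlinarith
  have : min (ψ t) 0 = 0 := by
    have : (min (ψ t) 0)^2 ≤ 0 := hf0
    nlinarith [sq_nonneg (min (ψ t) 0)]
  rcases le_or_gt 0 (ψ t) with h' | h'
  · exact h'
  · rw [min_eq_left h'.le] at this; linarith

/-- Backward barrier lemma: if `ψ T ≥ 0` and `ψ' ≤ K ψ` wherever `ψ < 0`, then `ψ ≥ 0`
on `[s,T]`. -/
lemma barrier_bwd (ψ ψ' : ℝ → ℝ) (K s T : ℝ)
    (hc : ContinuousOn ψ (Icc s T))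
    (hd : ∀ t ∈ Ioo s T, HasDerivAt ψ (ψ' t) t)
    (h : ∀ t ∈ Ioo s T, ψ t < 0 → ψ' t ≤ K * ψ t)
    (h0 : 0 ≤ ψ T) :
    ∀ t ∈ Icc s T, 0 ≤ ψ t := by
  intro t ht
  set f : ℝ → ℝ := fun t => -((min (ψ t) 0)^2) with hf
  have hfc : ContinuousOn f (Icc s T) := fun u hu =>
    (((hc u hu).min continuousWithinAt_const).pow 2).neg
  have hfd : ∀ u ∈ Ioo s T, HasDerivAt f (-(2 * min (ψ u) 0 * ψ' u)) u := by
    intro u hu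
    exact ((hasDerivAt_minsq (ψ u)).comp u (hd u hu)).neg
  have hfle : ∀ u ∈ Ioo s T, -(2 * min (ψ u) 0 * ψ' u) ≤ (2*K) * f u := by
    intro u hu
    rcases le_or_gt 0 (ψ u) with hψ | hψ
    · simp [hf, min_eq_right hψ]
    · have := h u hu hψ
      simp only [hf, min_eq_left hψ.le]
      nlinarith
  have hA := gronwall_anti f _ (2*K) s T hfc hfd hfle
  have hT : T ∈ Icc s T := ⟨ht.1.trans ht.2, le_refl T⟩
  have := hA ht hT ht.2
  dsimp only at this
  have hfT : f T = 0 := by simp [hf, min_eq_right h0]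
  rw [hfT, zero_mul] at this
  have hexp : (0:ℝ) < Real.exp (-(2*K) * t) := Real.exp_pos _
  have hf0 : (min (ψ t) 0)^2 ≤ 0 := by
    by_contra hcon
    push_neg at hcon
    simp only [hf] at this
    nlinarith
  have : min (ψ t) 0 = 0 := by nlinarith [sq_nonneg (min (ψ t) 0)]
  rcases le_or_gt 0 (ψ t) with h' | h'
  · exact h'
  · rw [min_eq_left h'.le] at this; linarith

/-- Data of a scalar field `g(t,x)`, strictly concave in `x` (uniformly on compacts),
jointly continuous, with `x`-derivative `gx`. -/
structure ConcData where
  g : ℝ → ℝ → ℝ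
  gx : ℝ → ℝ → ℝ
  cont : Continuous fun p : ℝ × ℝ => g p.1 p.2
  deriv : ∀ t x, HasDerivAt (g t) (gx t x) x
  conc : ∀ j : ℕ, ∃ δ > (0:ℝ), ∀ t : ℝ,
      ∀ x₁ ∈ Set.Icc (-(j:ℝ)) (j:ℝ), ∀ x₂ ∈ Set.Icc (-(j:ℝ)) (j:ℝ), x₁ ≠ x₂ →
        (gx t x₂ - gx t x₁) / (x₂ - x₁) < -δ

namespace ConcData

variable (D : ConcData)

lemma gx_lt {j : ℕ} {δ : ℝ}
    (hδ : ∀ t : ℝ, ∀ x₁ ∈ Set.Icc (-(j:ℝ)) (j:ℝ), ∀ x₂ ∈ Set.Icc (-(j:ℝ)) (j:ℝ), x₁ ≠ x₂ →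
        (D.gx t x₂ - D.gx t x₁) / (x₂ - x₁) < -δ)
    (t : ℝ) {a b : ℝ} (ha : a ∈ Set.Icc (-(j:ℝ)) (j:ℝ)) (hb : b ∈ Set.Icc (-(j:ℝ)) (j:ℝ))
    (hab : a < b) : D.gx t b < D.gx t a - δ * (b - a) := by
  have h := hδ t a ha b hb (ne_of_lt hab)
  have hba : 0 < b - a := by linarith
  rw [div_lt_iff₀ hba] at h
  linarith

lemma gx_anti (t : ℝ) : StrictAnti (D.gx t) := by
  intro a b hab
  obtain ⟨j, hj⟩ := exists_nat_ge (max |a| |b|)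
  have ha : a ∈ Set.Icc (-(j:ℝ)) (j:ℝ) := by
    rw [Set.mem_Icc, ← abs_le]
    exact (le_max_left _ _).trans hj
  have hb : b ∈ Set.Icc (-(j:ℝ)) (j:ℝ) := by
    rw [Set.mem_Icc, ← abs_le]
    exact (le_max_right _ _).trans hj
  obtain ⟨δ, hδ0, hδ⟩ := D.conc j
  have := D.gx_lt hδ t ha hb hab
  nlinarith

lemma slope_mem (t : ℝ) {a b : ℝ} (hab : a < b) :
    ∃ ξ ∈ Ioo a b, D.g t b - D.g t a = D.gx t ξ * (b - a) := by
  have hcont : ContinuousOn (D.g t) (Icc a b) := fun x _ =>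
    (D.deriv t x).continuousAt.continuousWithinAt
  obtain ⟨ξ, hξ, heq⟩ := exists_hasDerivAt_eq_slope (D.g t) (D.gx t) hab hcont
    (fun x _ => D.deriv t x)
  refine ⟨ξ, hξ, ?_⟩
  rw [heq]
  exact (div_mul_cancel₀ _ (ne_of_gt (sub_pos.mpr hab))).symm

lemma chord_le (t : ℝ) {a b : ℝ} (hab : a ≤ b) :
    D.g t b - D.g t a ≤ D.gx t a * (b - a) := by
  rcases eq_or_lt_of_le hab with rfl | h
  · simp
  obtain ⟨ξ, hξ, heq⟩ := D.slope_mem t h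
  rw [heq]
  have hle : D.gx t ξ ≤ D.gx t a := ((D.gx_anti t) hξ.1).le
  exact mul_le_mul_of_nonneg_right hle (by linarith [hξ.1, hξ.2])

lemma chord_ge (t : ℝ) {a b : ℝ} (hab : a ≤ b) :
    D.gx t b * (b - a) ≤ D.g t b - D.g t a := by
  rcases eq_or_lt_of_le hab with rfl | h
  · simp
  obtain ⟨ξ, hξ, heq⟩ := D.slope_mem t h
  rw [heq]
  have hle : D.gx t b ≤ D.gx t ξ := ((D.gx_anti t) hξ.2).le
  exact mul_le_mul_of_nonneg_right hle (by linarith [hξ.1, hξ.2])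

lemma chord_rate_le {j : ℕ} {δ : ℝ} (hδ0 : 0 < δ)
    (hδ : ∀ t : ℝ, ∀ x₁ ∈ Set.Icc (-(j:ℝ)) (j:ℝ), ∀ x₂ ∈ Set.Icc (-(j:ℝ)) (j:ℝ), x₁ ≠ x₂ →
        (D.gx t x₂ - D.gx t x₁) / (x₂ - x₁) < -δ)
    (t : ℝ) {a b : ℝ} (ha : a ∈ Set.Icc (-(j:ℝ)) (j:ℝ)) (hb : b ∈ Set.Icc (-(j:ℝ)) (j:ℝ))
    (hab : a < b) :
    D.g t b - D.g t a ≤ (D.gx t a - δ * (b - a) / 4) * (b - a) := by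
  set m := (a + b) / 2 with hm
  have ham : a < m := by rw [hm]; linarith
  have hmb : m < b := by rw [hm]; linarith
  have hmmem : m ∈ Set.Icc (-(j:ℝ)) (j:ℝ) := by
    constructor
    · have := ha.1; have := hb.1; rw [hm]; linarith
    · have := ha.2; have := hb.2; rw [hm]; linarith
  have hba : m - a = (b - a) / 2 := by rw [hm]; ring
  have hbm : b - m = (b - a) / 2 := by rw [hm]; ring
  have h1 : D.g t m - D.g t a ≤ D.gx t a * (m - a) := D.chord_le t ham.le
  have h2 : D.g t b - D.g t m ≤ D.gx t m * (b - m) := D.chord_le t hmb.le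
  have h3 : D.gx t m < D.gx t a - δ * (m - a) := D.gx_lt hδ t ha hmmem ham
  rw [hba] at h1 h3
  rw [hbm] at h2
  have h5 : D.gx t m * ((b-a)/2) ≤ (D.gx t a - δ * ((b-a)/2)) * ((b-a)/2) :=
    mul_le_mul_of_nonneg_right h3.le (by linarith)
  nlinarith [h1, h2, h5]

lemma chord_rate_ge {j : ℕ} {δ : ℝ} (hδ0 : 0 < δ)
    (hδ : ∀ t : ℝ, ∀ x₁ ∈ Set.Icc (-(j:ℝ)) (j:ℝ), ∀ x₂ ∈ Set.Icc (-(j:ℝ)) (j:ℝ), x₁ ≠ x₂ →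
        (D.gx t x₂ - D.gx t x₁) / (x₂ - x₁) < -δ)
    (t : ℝ) {a b : ℝ} (ha : a ∈ Set.Icc (-(j:ℝ)) (j:ℝ)) (hb : b ∈ Set.Icc (-(j:ℝ)) (j:ℝ))
    (hab : a < b) :
    (D.gx t b + δ * (b - a) / 4) * (b - a) ≤ D.g t b - D.g t a := by
  set m := (a + b) / 2 with hm
  have ham : a < m := by rw [hm]; linarith
  have hmb : m < b := by rw [hm]; linarith
  have hmmem : m ∈ Set.Icc (-(j:ℝ)) (j:ℝ) := by
    constructor
    · have := ha.1; have := hb.1; rw [hm]; linarith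
    · have := ha.2; have := hb.2; rw [hm]; linarith
  have hba : m - a = (b - a) / 2 := by rw [hm]; ring
  have hbm : b - m = (b - a) / 2 := by rw [hm]; ring
  have h1 : D.gx t m * (m - a) ≤ D.g t m - D.g t a := D.chord_ge t ham.le
  have h2 : D.gx t b * (b - m) ≤ D.g t b - D.g t m := D.chord_ge t hmb.le
  have h3 : D.gx t b < D.gx t m - δ * (b - m) := D.gx_lt hδ t hmmem hb hmb
  rw [hba] at h1
  rw [hbm] at h2 h3
  have h5 : (D.gx t b + δ * ((b-a)/2)) * ((b-a)/2) ≤ D.gx t m * ((b-a)/2) :=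
    mul_le_mul_of_nonneg_right (by linarith) (by linarith)
  nlinarith [h1, h2, h5]

/-- Chords from a common left endpoint decrease when the right endpoint moves right. -/
lemma chord_mono_right (t : ℝ) {a b c : ℝ} (h1 : a < b) (h2 : b ≤ c) :
    (D.g t c - D.g t a) * (b - a) ≤ (D.g t b - D.g t a) * (c - a) := by
  rcases eq_or_lt_of_le h2 with rfl | h2
  · ring_nf; exact le_refl _
  obtain ⟨ξ₁, hξ₁, heq₁⟩ := D.slope_mem t h1
  obtain ⟨ξ₂, hξ₂, heq₂⟩ := D.slope_mem t h2
  have hgx : D.gx t ξ₂ ≤ D.gx t ξ₁ := ((D.gx_anti t) (hξ₁.2.trans hξ₂.1)).le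
  have hca : D.g t c - D.g t a = D.gx t ξ₁ * (b - a) + D.gx t ξ₂ * (c - b) := by
    rw [← heq₁, ← heq₂]; ring
  rw [hca, heq₁]
  nlinarith [mul_nonneg (mul_nonneg (sub_pos.mpr h1).le (sub_pos.mpr h2).le)
    (sub_nonneg.mpr hgx)]

/-- Chords to a common right endpoint decrease when the left endpoint moves right. -/
lemma chord_mono_left (t : ℝ) {a b c : ℝ} (h1 : a ≤ b) (h2 : b < c) :
    (D.g t c - D.g t b) * (c - a) ≤ (D.g t c - D.g t a) * (c - b) := by
  rcases eq_or_lt_of_le h1 with rfl | h1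
  · ring_nf; exact le_refl _
  obtain ⟨ξ₁, hξ₁, heq₁⟩ := D.slope_mem t h1
  obtain ⟨ξ₂, hξ₂, heq₂⟩ := D.slope_mem t h2
  have hgx : D.gx t ξ₂ ≤ D.gx t ξ₁ := ((D.gx_anti t) (hξ₁.2.trans hξ₂.1)).le
  have hca : D.g t c - D.g t a = D.gx t ξ₁ * (b - a) + D.gx t ξ₂ * (c - b) := by
    rw [← heq₁, ← heq₂]; ring
  rw [hca, heq₂]
  nlinarith [mul_nonneg (mul_nonneg (sub_pos.mpr h1).le (sub_pos.mpr h2).le)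
    (sub_nonneg.mpr hgx)]

/-- Local Lipschitz bound, uniform in `t` on compact time intervals. -/
lemma lipBound (p q R : ℝ) :
    ∃ K ≥ (0:ℝ), ∀ t ∈ Icc p q, ∀ x y : ℝ, |x| ≤ R → |y| ≤ R →
      |D.g t x - D.g t y| ≤ K * |x - y| := by
  rcases le_or_gt p q with hpq | hpq
  swap
  · exact ⟨0, le_refl 0, fun t ht => absurd (ht.1.trans ht.2) (not_le.mpr hpq)⟩
  set A : ℝ → ℝ := fun t => max (|D.g t (-R) - D.g t (-R-1)|) (|D.g t (R+1) - D.g t R|) with hA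
  have hAc : ContinuousOn A (Icc p q) := by
    have hc : ∀ c : ℝ, Continuous fun t => D.g t c := fun c =>
      D.cont.comp (continuous_id.prodMk continuous_const)
    exact (((((hc (-R)).sub (hc (-R-1))).abs).max (((hc (R+1)).sub (hc R)).abs))).continuousOn
  obtain ⟨K0, hK0⟩ := (isCompact_Icc).exists_bound_of_continuousOn hAc
  refine ⟨max K0 0, le_max_right _ _, ?_⟩
  intro t ht x y hx hy
  have hAb : A t ≤ max K0 0 := by
    have := hK0 t ht
    rw [Real.norm_eq_abs] at this
    exact (le_abs_self _).trans (this.trans (le_max_left _ _))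
  -- key: for u < v in [-R, R], |g t v - g t u| ≤ A t * (v - u)
  have key : ∀ u v : ℝ, |u| ≤ R → |v| ≤ R → u < v →
      |D.g t v - D.g t u| ≤ A t * (v - u) := by
    intro u v hu hv huv
    rw [abs_le] at hu hv
    have hup : D.g t v - D.g t u ≤ D.gx t u * (v - u) := D.chord_le t huv.le
    have hlow : D.gx t v * (v - u) ≤ D.g t v - D.g t u := D.chord_ge t huv.le
    have h1 : D.gx t u ≤ D.gx t (-R) := by
      rcases eq_or_lt_of_le hu.1 with h | h
      · rw [← h]
      · exact ((D.gx_anti t) h).le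
    have h2 : D.gx t (-R) ≤ D.g t (-R) - D.g t (-R-1) := by
      have h := D.chord_ge t (show -R-1 ≤ -R by linarith)
      have he : -R - (-R-1) = (1:ℝ) := by ring
      rw [he, mul_one] at h
      exact h
    have h3 : D.gx t R ≤ D.gx t v := by
      rcases eq_or_lt_of_le hv.2 with h | h
      · rw [h]
      · exact ((D.gx_anti t) h).le
    have h4 : D.g t (R+1) - D.g t R ≤ D.gx t R := by
      have h := D.chord_le t (show R ≤ R+1 by linarith)
      have he : R + 1 - R = (1:ℝ) := by ring
      rw [he, mul_one] at h
      exact h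
    have hvu : (0:ℝ) ≤ v - u := by linarith
    have hA1 : D.g t (-R) - D.g t (-R-1) ≤ A t :=
      (le_abs_self _).trans (le_max_left _ _)
    have hA2 : -(A t) ≤ D.g t (R+1) - D.g t R := by
      have h' : |D.g t (R+1) - D.g t R| ≤ A t := le_max_right _ _
      rw [abs_le] at h'
      linarith [h'.1]
    have hub : D.g t v - D.g t u ≤ A t * (v - u) := by
      calc D.g t v - D.g t u ≤ D.gx t u * (v - u) := hup
        _ ≤ D.gx t (-R) * (v - u) := mul_le_mul_of_nonneg_right h1 hvu
        _ ≤ (D.g t (-R) - D.g t (-R-1)) * (v - u) := mul_le_mul_of_nonneg_right h2 hvu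
        _ ≤ A t * (v - u) := mul_le_mul_of_nonneg_right hA1 hvu
    have hlb : -(A t * (v - u)) ≤ D.g t v - D.g t u := by
      calc -(A t * (v - u)) = (-(A t)) * (v - u) := by ring
        _ ≤ (D.g t (R+1) - D.g t R) * (v - u) := mul_le_mul_of_nonneg_right hA2 hvu
        _ ≤ D.gx t R * (v - u) := mul_le_mul_of_nonneg_right h4 hvu
        _ ≤ D.gx t v * (v - u) := mul_le_mul_of_nonneg_right h3 hvu
        _ ≤ D.g t v - D.g t u := hlow
    rw [abs_le]
    constructor <;> linarith
  rcases lt_trichotomy x y with h | rfl | h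
  · calc |D.g t x - D.g t y| = |D.g t y - D.g t x| := abs_sub_comm _ _
      _ ≤ A t * (y - x) := key x y hx hy h
      _ ≤ max K0 0 * (y - x) := mul_le_mul_of_nonneg_right hAb (by linarith)
      _ = max K0 0 * |x - y| := by rw [abs_sub_comm, abs_of_pos (sub_pos.mpr h)]
  · simp
  · calc |D.g t x - D.g t y| ≤ A t * (x - y) := key y x hy hx h
      _ ≤ max K0 0 * (x - y) := mul_le_mul_of_nonneg_right hAb (by linarith)
      _ = max K0 0 * |x - y| := by rw [abs_of_pos (sub_pos.mpr h)]

end ConcData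

/-- A concave field together with an attractor–repeller-type pair of bounded,
uniformly separated solutions. -/
structure ARData extends ConcData where
  a : ℝ → ℝ
  r : ℝ → ℝ
  sola : ∀ t, HasDerivAt a (g t (a t)) t
  solr : ∀ t, HasDerivAt r (g t (r t)) t
  M : ℝ
  hM : ∀ t, |a t| ≤ M ∧ |r t| ≤ M
  d : ℝ
  dpos : 0 < d
  sep : ∀ t, d ≤ a t - r t

namespace ARData

lemma a_cont (D : ARData) : Continuous D.a :=
  continuous_iff_continuousAt.mpr fun t => (D.sola t).continuousAt

lemma r_cont (D : ARData) : Continuous D.r :=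
  continuous_iff_continuousAt.mpr fun t => (D.solr t).continuousAt

lemma M_nonneg (D : ARData) : 0 ≤ D.M := (abs_nonneg _).trans (D.hM 0).1

/-- Time- and space-reversal `(t, x) ↦ (2 t₀ - t, -x)`, which preserves concavity and
swaps the roles of the attractor and the repeller. -/
def flip (D : ARData) (t₀ : ℝ) : ARData where
  g := fun τ ξ => D.g (2*t₀ - τ) (-ξ)
  gx := fun τ ξ => -(D.gx (2*t₀ - τ) (-ξ))
  cont := by
    have h : Continuous fun p : ℝ × ℝ => ((2*t₀ - p.1, -p.2) : ℝ × ℝ) := by continuity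
    exact D.cont.comp h
  deriv := by
    intro t x
    have h := (D.deriv (2*t₀ - t) (-x)).comp x (hasDerivAt_neg x)
    simpa [mul_comm, Function.comp_def] using h
  conc := by
    intro j
    obtain ⟨δ, hδ0, hδ⟩ := D.conc j
    refine ⟨δ, hδ0, ?_⟩
    intro t x₁ h₁ x₂ h₂ hne
    have h₁' : -x₁ ∈ Set.Icc (-(j:ℝ)) (j:ℝ) := by
      rw [Set.mem_Icc] at h₁ ⊢; constructor <;> linarith [h₁.1, h₁.2]
    have h₂' : -x₂ ∈ Set.Icc (-(j:ℝ)) (j:ℝ) := by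
      rw [Set.mem_Icc] at h₂ ⊢; constructor <;> linarith [h₂.1, h₂.2]
    have hne' : -x₂ ≠ -x₁ := fun h => hne (by linarith [neg_injective h])
    have := hδ (2*t₀ - t) (-x₂) h₂' (-x₁) h₁' hne'
    have heq : (D.gx (2*t₀ - t) (-x₁) - D.gx (2*t₀ - t) (-x₂)) / (-x₁ - -x₂)
        = (-(D.gx (2*t₀ - t) (-x₂)) - -(D.gx (2*t₀ - t) (-x₁))) / (x₂ - x₁) := by
      rw [show -x₁ - -x₂ = x₂ - x₁ by ring]
      ring_nf
    rw [heq] at this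
    exact this
  a := fun τ => -(D.r (2*t₀ - τ))
  r := fun τ => -(D.a (2*t₀ - τ))
  sola := by
    intro t
    have hin : HasDerivAt (fun τ : ℝ => 2*t₀ - τ) (-1) t := by
      simpa using (hasDerivAt_id t).const_sub (2*t₀)
    have h := ((D.solr (2*t₀ - t)).comp t hin).neg
    simpa [Function.comp_def, Pi.neg_def] using h
  solr := by
    intro t
    have hin : HasDerivAt (fun τ : ℝ => 2*t₀ - τ) (-1) t := by
      simpa using (hasDerivAt_id t).const_sub (2*t₀)
    have h := ((D.sola (2*t₀ - t)).comp t hin).neg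
    simpa [Function.comp_def, Pi.neg_def] using h
  M := D.M
  hM := by
    intro t
    constructor
    · rw [abs_neg]; exact (D.hM _).2
    · rw [abs_neg]; exact (D.hM _).1
  d := D.d
  dpos := D.dpos
  sep := by
    intro t
    have := D.sep (2*t₀ - t)
    linarith

/-- A solution of `x' = g(t,x)` on `(t₀, ∞)` which is globally bounded must start at or
above the repeller: `x t₀ ≥ r t₀`. -/
lemma start_above (D : ARData) (t₀ B : ℝ) (x : ℝ → ℝ)
    (hxc : ContinuousOn x (Ici t₀))
    (hxd : ∀ t > t₀, HasDerivAt x (D.g t (x t)) t)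
    (hxB : ∀ t ≥ t₀, |x t| ≤ B) :
    D.r t₀ ≤ x t₀ := by
  by_contra hcon
  push_neg at hcon
  -- setup
  set z : ℝ → ℝ := fun t => D.r t - x t with hzdef
  set u : ℝ → ℝ := fun t => D.a t - D.r t with hudef
  set q : ℝ → ℝ := fun t => z t / u t with hqdef
  have hupos : ∀ t, 0 < u t := fun t => lt_of_lt_of_le D.dpos (D.sep t)
  have hule : ∀ t, D.d ≤ u t := fun t => D.sep t
  obtain ⟨j, hj⟩ := exists_nat_ge (max B D.M)
  obtain ⟨δ, hδ0, hδ⟩ := D.conc j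
  set c₀ : ℝ := δ * D.d / 4 with hc₀
  have hc₀pos : 0 < c₀ := by
    rw [hc₀]
    exact div_pos (mul_pos hδ0 D.dpos) (by norm_num)
  have hmem : ∀ y : ℝ, |y| ≤ max B D.M → y ∈ Set.Icc (-(j:ℝ)) (j:ℝ) := by
    intro y hy
    rw [Set.mem_Icc, ← abs_le]
    exact hy.trans hj
  have hmemx : ∀ t ≥ t₀, x t ∈ Set.Icc (-(j:ℝ)) (j:ℝ) := fun t ht =>
    hmem _ ((hxB t ht).trans (le_max_left _ _))
  have hmema : ∀ t, D.a t ∈ Set.Icc (-(j:ℝ)) (j:ℝ) := fun t =>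
    hmem _ ((D.hM t).1.trans (le_max_right _ _))
  have hmemr : ∀ t, D.r t ∈ Set.Icc (-(j:ℝ)) (j:ℝ) := fun t =>
    hmem _ ((D.hM t).2.trans (le_max_right _ _))
  -- derivative expressions
  set zd : ℝ → ℝ := fun t => D.g t (D.r t) - D.g t (x t) with hzddef
  set ud : ℝ → ℝ := fun t => D.g t (D.a t) - D.g t (D.r t) with huddef
  set qd : ℝ → ℝ := fun t => (zd t * u t - z t * ud t) / (u t)^2 with hqddef
  have hqder : ∀ t > t₀, HasDerivAt q (qd t) t := by
    intro t ht
    have hz : HasDerivAt z (zd t) t := (D.solr t).sub (hxd t ht)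
    have hu : HasDerivAt u (ud t) t := (D.sola t).sub (D.solr t)
    exact hz.div hu (ne_of_gt (hupos t))
  -- the key differential inequality
  have hkey : ∀ t > t₀, 0 < z t → c₀ * q t ≤ qd t := by
    intro t ht hz
    have hxr : x t < D.r t := by
      simp only [hzdef] at hz; linarith
    have hra : D.r t < D.a t := by linarith [D.dpos, D.sep t]
    have h₁ := D.chord_rate_ge hδ0 hδ t (hmemx t ht.le) (hmemr t) hxr
    have h₂ := D.chord_rate_le hδ0 hδ t (hmemr t) (hmema t) hra
    -- h₁ : (gx t (r t) + δ*(r t - x t)/4) * (r t - x t) ≤ g t (r t) - g t (x t)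
    -- h₂ : g t (a t) - g t (r t) ≤ (gx t (r t) - δ*(a t - r t)/4) * (a t - r t)
    have hz' : z t = D.r t - x t := rfl
    have hu' : u t = D.a t - D.r t := rfl
    have hzd' : zd t = D.g t (D.r t) - D.g t (x t) := rfl
    have hud' : ud t = D.g t (D.a t) - D.g t (D.r t) := rfl
    have hu0 : 0 < u t := hupos t
    have key : c₀ * z t * u t ≤ zd t * u t - z t * ud t := by
      have P1 : (D.gx t (D.r t) + δ*(z t)/4) * (z t) * u t ≤ zd t * u t := by
        apply mul_le_mul_of_nonneg_right _ hu0.le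
        show (D.gx t (D.r t) + δ*(z t)/4) * (z t) ≤ zd t
        rw [hzd', hz']
        exact h₁
      have P2 : z t * ud t ≤ z t * ((D.gx t (D.r t) - δ*(u t)/4) * (u t)) := by
        apply mul_le_mul_of_nonneg_left _ hz.le
        show ud t ≤ (D.gx t (D.r t) - δ*(u t)/4) * (u t)
        rw [hud', hu']
        exact h₂
      have P3 : 0 ≤ δ/4 * (z t * u t * (z t + u t - D.d)) := by
        apply mul_nonneg (by linarith)
        apply mul_nonneg (mul_nonneg hz.le hu0.le)
        linarith [hule t]
      rw [hc₀]
      nlinarith [P1, P2, P3]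
    have hu2 : (0:ℝ) < (u t)^2 := by positivity
    have hq' : c₀ * q t = (c₀ * z t * u t) / (u t)^2 := by
      rw [hqdef]
      field_simp
    rw [hq', hqddef]
    exact (div_le_div_iff_of_pos_right hu2).mpr key
  -- continuity facts
  have hq0pos : 0 < q t₀ := div_pos (by simp only [hzdef]; linarith) (hupos t₀)
  have hzc : ContinuousOn z (Ici t₀) := (D.r_cont.continuousOn).sub hxc
  have huc : Continuous u := D.a_cont.sub D.r_cont
  have hqc : ContinuousOn q (Ici t₀) :=
    hzc.div huc.continuousOn (fun t _ => ne_of_gt (hupos t))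
  -- monotonicity of `q e^{-c₀ t}` while `z > 0`
  have hmono : ∀ s, t₀ ≤ s → (∀ τ ∈ Icc t₀ s, 0 < z τ) →
      q t₀ * Real.exp (c₀ * (s - t₀)) ≤ q s := by
    intro s hs hpos
    have hA := gronwall_anti (fun t => -(q t)) (fun t => -(qd t)) c₀ t₀ s
      ((hqc.mono Icc_subset_Ici_self).neg)
      (fun t ht => (hqder t ht.1).neg)
      (fun t ht => by
        have := hkey t ht.1 (hpos t ⟨ht.1.le, ht.2.le⟩)
        linarith)
    have h1 := hA (left_mem_Icc.mpr hs) (right_mem_Icc.mpr hs) hs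
    dsimp only at h1
    have h2 : q t₀ * Real.exp (-c₀ * t₀) ≤ q s * Real.exp (-c₀ * s) := by linarith
    have h3 := mul_le_mul_of_nonneg_right h2 (Real.exp_pos (c₀ * s)).le
    calc q t₀ * Real.exp (c₀ * (s - t₀))
        = q t₀ * Real.exp (-c₀ * t₀) * Real.exp (c₀ * s) := by
          rw [mul_assoc, ← Real.exp_add, show -c₀ * t₀ + c₀ * s = c₀ * (s - t₀) by ring]
      _ ≤ q s * Real.exp (-c₀ * s) * Real.exp (c₀ * s) := h3
      _ = q s := by
          rw [mul_assoc, ← Real.exp_add, show -c₀ * s + c₀ * s = 0 by ring,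
            Real.exp_zero, mul_one]
  have hBnn : 0 ≤ B := (abs_nonneg _).trans (hxB t₀ le_rfl)
  have hQ : ∀ s ≥ t₀, q s ≤ (D.M + B + 1) / D.d := by
    intro s hs
    have hzle : z s ≤ D.M + B + 1 := by
      have ha1 := (D.hM s).2
      have ha2 := hxB s hs
      have h1 : D.r s ≤ |D.r s| := le_abs_self _
      have h2 : -(x s) ≤ |x s| := neg_le_abs _
      simp only [hzdef]; linarith
    exact div_le_div₀ (by linarith [D.M_nonneg]) hzle D.dpos (hule s)
  by_cases hS : ∃ s ≥ t₀, z s ≤ 0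
  · obtain ⟨s₁, hs₁, hzs₁⟩ := hS
    have hs₁' : t₀ < s₁ := by
      rcases eq_or_lt_of_le hs₁ with rfl | h
      · exfalso; simp only [hzdef] at hzs₁; linarith
      · exact h
    have hclosed : IsClosed {t ∈ Icc t₀ s₁ | z t ≤ 0} := by
      have hcz : ContinuousOn z (Icc t₀ s₁) := hzc.mono Icc_subset_Ici_self
      have hset : {t ∈ Icc t₀ s₁ | z t ≤ 0} = Icc t₀ s₁ ∩ z ⁻¹' (Iic 0) := by
        ext τ; simp [Set.mem_inter_iff]
      rw [hset]
      exact hcz.preimage_isClosed_of_isClosed isClosed_Icc isClosed_Iic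
    have hne : {t ∈ Icc t₀ s₁ | z t ≤ 0}.Nonempty := ⟨s₁, ⟨hs₁, le_refl s₁⟩, hzs₁⟩
    have hbdd : BddBelow {t ∈ Icc t₀ s₁ | z t ≤ 0} := ⟨t₀, fun t ht => ht.1.1⟩
    obtain ⟨s', hmemS, hs'lb⟩ : ∃ s', s' ∈ {t ∈ Icc t₀ s₁ | z t ≤ 0} ∧
        ∀ t ∈ {t ∈ Icc t₀ s₁ | z t ≤ 0}, s' ≤ t :=
      ⟨_, hclosed.csInf_mem hne hbdd, fun t ht => csInf_le hbdd ht⟩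
    have hs'ge : t₀ ≤ s' := hmemS.1.1
    have hs'le : s' ≤ s₁ := hmemS.1.2
    have hzs' : z s' ≤ 0 := hmemS.2
    have hs'gt : t₀ < s' := by
      rcases eq_or_lt_of_le hs'ge with rfl | h
      · exfalso; simp only [hzdef] at hzs'; linarith
      · exact h
    have hpos : ∀ τ ∈ Ico t₀ s', 0 < z τ := by
      intro τ hτ
      by_contra hz
      push_neg at hz
      have hmm : τ ∈ {t ∈ Icc t₀ s₁ | z t ≤ 0} := ⟨⟨hτ.1, hτ.2.le.trans hs'le⟩, hz⟩
      have := hs'lb τ hmm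
      linarith [hτ.2]
    have hlow : ∀ s ∈ Ico t₀ s', q t₀ * D.d ≤ z s := by
      intro s hsmem
      have h1 := hmono s hsmem.1 (fun τ hτ => hpos τ ⟨hτ.1, lt_of_le_of_lt hτ.2 hsmem.2⟩)
      have h2 : q t₀ ≤ q s := by
        have he : (1:ℝ) ≤ Real.exp (c₀ * (s - t₀)) := by
          rw [← Real.exp_zero]
          apply Real.exp_le_exp.mpr
          have : 0 ≤ s - t₀ := by linarith [hsmem.1]
          positivity
        nlinarith
      have hz : z s = q s * u s := (div_mul_cancel₀ _ (ne_of_gt (hupos s))).symm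
      rw [hz]
      exact mul_le_mul h2 (hule s) D.dpos.le (le_trans hq0pos.le h2)
    have hC : IsClosed {t ∈ Icc t₀ s' | q t₀ * D.d ≤ z t} := by
      have hcz : ContinuousOn z (Icc t₀ s') := hzc.mono Icc_subset_Ici_self
      have hset : {t ∈ Icc t₀ s' | q t₀ * D.d ≤ z t}
          = Icc t₀ s' ∩ z ⁻¹' (Ici (q t₀ * D.d)) := by
        ext τ; simp [Set.mem_inter_iff]
      rw [hset]
      exact hcz.preimage_isClosed_of_isClosed isClosed_Icc isClosed_Ici
    have hsub : Ico t₀ s' ⊆ {t ∈ Icc t₀ s' | q t₀ * D.d ≤ z t} := by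
      intro τ hτ
      exact ⟨⟨hτ.1, hτ.2.le⟩, hlow τ hτ⟩
    have hfin : s' ∈ {t ∈ Icc t₀ s' | q t₀ * D.d ≤ z t} := by
      have h1 : s' ∈ closure (Ico t₀ s') := by
        rw [closure_Ico (ne_of_lt hs'gt)]
        exact ⟨hs'ge, le_refl _⟩
      exact (hC.closure_subset_iff.mpr hsub) h1
    have := hfin.2
    linarith [mul_pos hq0pos D.dpos]
  · push_neg at hS
    set Q := (D.M + B + 1) / D.d with hQdef
    have hQpos : 0 < Q := by
      rw [hQdef]
      exact div_pos (by linarith [D.M_nonneg]) D.dpos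
    have hQq : 0 < Q / q t₀ := div_pos hQpos hq0pos
    set s := t₀ + (max 0 (Real.log (Q / q t₀)) + 1) / c₀ with hsdef
    have hs : t₀ ≤ s := by
      rw [hsdef]
      have h1 : 0 ≤ max 0 (Real.log (Q / q t₀)) := le_max_left _ _
      have : 0 ≤ (max 0 (Real.log (Q / q t₀)) + 1) / c₀ :=
        div_nonneg (by linarith) hc₀pos.le
      linarith
    have h1 := hmono s hs (fun τ hτ => hS τ hτ.1)
    have h2 : Q / q t₀ < Real.exp (c₀ * (s - t₀)) := by
      have he : c₀ * (s - t₀) = max 0 (Real.log (Q / q t₀)) + 1 := by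
        rw [hsdef]
        have h' : t₀ + (max 0 (Real.log (Q / q t₀)) + 1) / c₀ - t₀
            = (max 0 (Real.log (Q / q t₀)) + 1) / c₀ := by ring
        rw [h', mul_comm, div_mul_cancel₀ _ (ne_of_gt hc₀pos)]
      rw [he]
      calc Q / q t₀ = Real.exp (Real.log (Q / q t₀)) := (Real.exp_log hQq).symm
        _ < Real.exp (max 0 (Real.log (Q / q t₀)) + 1) := by
            apply Real.exp_lt_exp.mpr
            have := le_max_right 0 (Real.log (Q / q t₀))
            linarith
    have h3 : Q < q t₀ * Real.exp (c₀ * (s - t₀)) := by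
      have := mul_lt_mul_of_pos_left h2 hq0pos
      calc Q = q t₀ * (Q / q t₀) := by field_simp
        _ < q t₀ * Real.exp (c₀ * (s - t₀)) := this
    have h4 := hQ s hs
    linarith

end ARData

/-- Generic uniqueness via Gronwall: two solutions of `x' = v(t,x)` on `[s,T]` that agree
at `s` and along which `v` is Lipschitz, agree on `[s,T]`. -/
lemma uniq_on (v : ℝ → ℝ → ℝ) (K s T : ℝ) (x y : ℝ → ℝ)
    (hxc : ContinuousOn x (Icc s T)) (hyc : ContinuousOn y (Icc s T))
    (hxd : ∀ t ∈ Ioo s T, HasDerivAt x (v t (x t)) t)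
    (hyd : ∀ t ∈ Ioo s T, HasDerivAt y (v t (y t)) t)
    (hlip : ∀ t ∈ Ioo s T, |v t (x t) - v t (y t)| ≤ K * |x t - y t|)
    (h0 : x s = y s) : ∀ t ∈ Icc s T, x t = y t := by
  intro t ht
  set w : ℝ → ℝ := fun t => x t - y t with hw
  set φ : ℝ → ℝ := fun t => (w t)^2 with hφ
  set φd : ℝ → ℝ := fun t => 2 * w t * (v t (x t) - v t (y t)) with hφd
  have hφc : ContinuousOn φ (Icc s T) := ((hxc.sub hyc).pow 2)
  have hφdAt : ∀ u ∈ Ioo s T, HasDerivAt φ (φd u) u := by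
    intro u hu
    have h1 : HasDerivAt w (v u (x u) - v u (y u)) u := (hxd u hu).sub (hyd u hu)
    have := h1.pow 2
    simpa [hφd, hφ, mul_comm, mul_assoc, mul_left_comm, Pi.pow_def] using this
  have hle : ∀ u ∈ Ioo s T, φd u ≤ (2*K) * φ u := by
    intro u hu
    have h1 := hlip u hu
    have h2 : 2 * w u * (v u (x u) - v u (y u)) ≤ 2 * |w u| * |v u (x u) - v u (y u)| := by
      have := abs_mul (2 * w u) (v u (x u) - v u (y u))
      have h3 : 2 * w u * (v u (x u) - v u (y u)) ≤ |2 * w u * (v u (x u) - v u (y u))| :=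
        le_abs_self _
      rw [this] at h3
      have h4 : |2 * w u| = 2 * |w u| := by rw [abs_mul]; norm_num
      rw [h4] at h3
      exact h3
    have h5 : 2 * |w u| * |v u (x u) - v u (y u)| ≤ 2 * |w u| * (K * |w u|) := by
      apply mul_le_mul_of_nonneg_left _ (by positivity)
      simpa [hw] using h1
    have h6 : 2 * |w u| * (K * |w u|) = 2 * K * (w u)^2 := by
      rw [← sq_abs (w u)]; ring
    simp only [hφd, hφ]
    calc 2 * w u * (v u (x u) - v u (y u)) ≤ 2 * |w u| * |v u (x u) - v u (y u)| := h2
      _ ≤ 2 * |w u| * (K * |w u|) := h5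
      _ = 2 * K * (w u)^2 := h6
  have hA := gronwall_anti φ φd (2*K) s T hφc hφdAt hle
  have hst : s ∈ Icc s T := ⟨le_refl s, ht.1.trans ht.2⟩
  have h1 := hA hst ht ht.1
  dsimp only at h1
  have hφs : φ s = 0 := by simp [hφ, hw, h0]
  rw [hφs, zero_mul] at h1
  have hexp : (0:ℝ) < Real.exp (-(2*K) * t) := Real.exp_pos _
  have : φ t ≤ 0 := by
    by_contra hcon
    push_neg at hcon
    nlinarith
  have hsq : (w t)^2 = 0 := le_antisymm this (sq_nonneg _)
  have := pow_eq_zero_iff (n := 2) (by norm_num) |>.mp hsq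
  simp only [hw] at this
  linarith

namespace ARData

/-- A priori barrier estimates for a solution of the concave equation starting strictly
above the repeller: it stays uniformly above the repeller, and at most `C·2M` above the
attractor. -/
lemma apriori (D : ARData) (t₀ T : ℝ) (x : ℝ → ℝ) (hT : t₀ ≤ T)
    (hxc : ContinuousOn x (Icc t₀ T))
    (hxd : ∀ t ∈ Ioo t₀ T, HasDerivAt x (D.g t (x t)) t)
    (hstart : D.r t₀ < x t₀) :
    ∀ t ∈ Icc t₀ T,
      (min 1 ((x t₀ - D.r t₀)/(D.a t₀ - D.r t₀)) * D.d ≤ x t - D.r t) ∧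
      (x t ≤ D.a t + (max (x t₀ - D.a t₀) 0 / D.d) * (2*D.M)) := by
  set c : ℝ := min 1 ((x t₀ - D.r t₀)/(D.a t₀ - D.r t₀)) with hcdef
  set C : ℝ := max (x t₀ - D.a t₀) 0 / D.d with hCdef
  set u : ℝ → ℝ := fun t => D.a t - D.r t with hudef
  have hupos : ∀ t, 0 < u t := fun t => lt_of_lt_of_le D.dpos (D.sep t)
  have hule : ∀ t, D.d ≤ u t := fun t => D.sep t
  have huple : ∀ t, u t ≤ 2 * D.M := by
    intro t
    have h1 := (D.hM t).1
    have h2 := (D.hM t).2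
    have h3 := le_abs_self (D.a t)
    have h4 := neg_le_abs (D.r t)
    simp only [hudef]
    linarith
  have hc1 : c ≤ 1 := min_le_left _ _
  have hsep0 : 0 < D.a t₀ - D.r t₀ := hupos t₀
  have hcpos : 0 < c := by
    rw [hcdef]
    exact lt_min one_pos (div_pos (by linarith) hsep0)
  have hCnn : 0 ≤ C := div_nonneg (le_max_right _ _) D.dpos.le
  -- bound the range of x, a, r on [t₀, T]
  obtain ⟨R₀, hR₀⟩ := (isCompact_Icc (a := t₀) (b := T)).exists_bound_of_continuousOn hxc
  set R : ℝ := max R₀ D.M with hRdef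
  have hxR : ∀ t ∈ Icc t₀ T, |x t| ≤ R := fun t ht =>
    ((Real.norm_eq_abs (x t)) ▸ hR₀ t ht).trans (le_max_left _ _)
  have haR : ∀ t, |D.a t| ≤ R := fun t => (D.hM t).1.trans (le_max_right _ _)
  have hrR : ∀ t, |D.r t| ≤ R := fun t => (D.hM t).2.trans (le_max_right _ _)
  obtain ⟨K, hKnn, hK⟩ := D.toConcData.lipBound t₀ T R
  have hσ : ∀ t ∈ Icc t₀ T, |D.g t (D.a t) - D.g t (D.r t)| ≤ K * u t := by
    intro t ht
    have h := hK t ht (D.a t) (D.r t) (haR t) (hrR t)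
    have habs : |D.a t - D.r t| = u t := abs_of_pos (hupos t)
    rw [habs] at h
    exact h
  -- Step 1 : z ≥ 0
  have hz0 : ∀ t ∈ Icc t₀ T, 0 ≤ x t - D.r t := by
    apply barrier_fwd (fun t => x t - D.r t) (fun t => D.g t (x t) - D.g t (D.r t)) K t₀ T
      (hxc.sub (D.r_cont.continuousOn))
      (fun t ht => (hxd t ht).sub (D.solr t))
    · intro t ht hneg
      have h1 := hK t ⟨ht.1.le, ht.2.le⟩ (x t) (D.r t) (hxR t ⟨ht.1.le, ht.2.le⟩) (hrR t)
      rw [abs_le] at h1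
      have h2 : |x t - D.r t| = -(x t - D.r t) := abs_of_neg hneg
      rw [h2] at h1
      linarith [h1.1]
    · linarith
  -- Step 2 : z ≥ c u
  have hz1 : ∀ t ∈ Icc t₀ T, 0 ≤ (x t - D.r t) - c * u t := by
    apply barrier_fwd (fun t => (x t - D.r t) - c * u t)
      (fun t => (D.g t (x t) - D.g t (D.r t)) - c * (D.g t (D.a t) - D.g t (D.r t))) K t₀ T
    · exact (hxc.sub (D.r_cont.continuousOn)).sub
        (continuousOn_const.mul (D.a_cont.sub D.r_cont).continuousOn)
    · intro t ht
      exact ((hxd t ht).sub (D.solr t)).sub (((D.sola t).sub (D.solr t)).const_mul c)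
    · intro t ht hneg
      have htI : t ∈ Icc t₀ T := ⟨ht.1.le, ht.2.le⟩
      have hut : 0 < u t := hupos t
      have hu' : u t = D.a t - D.r t := rfl
      have hz := hz0 t htI
      have hzcu : x t - D.r t < c * u t := by linarith
      have hcu_le_u : c * u t ≤ u t := by nlinarith
      have hxa : x t < D.a t := by linarith
      have hkey : (D.g t (D.a t) - D.g t (D.r t)) * (x t - D.r t)
          ≤ (D.g t (x t) - D.g t (D.r t)) * (u t) := by
        rcases eq_or_lt_of_le hz with heq | hlt
        · have hxr : x t = D.r t := by linarith
          rw [← heq, hxr]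
          simp
        · have hrx : D.r t < x t := by linarith
          have h := D.chord_mono_right t (a := D.r t) (b := x t) (c := D.a t) hrx hxa.le
          rw [hu']
          linarith [h]
      have hσt := hσ t htI
      have hKu : (D.g t (D.a t) - D.g t (D.r t)) ≤ K * u t := (le_abs_self _).trans hσt
      have hstep1 : (K * (x t - D.r t - c * u t)) * u t
          ≤ (D.g t (D.a t) - D.g t (D.r t)) * (x t - D.r t - c * u t) := by
        calc (K * (x t - D.r t - c * u t)) * u t
            = (K * u t) * (x t - D.r t - c * u t) := by ring
          _ ≤ (D.g t (D.a t) - D.g t (D.r t)) * (x t - D.r t - c * u t) :=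
              mul_le_mul_of_nonpos_right hKu hneg.le
      have hstep2 : (D.g t (D.a t) - D.g t (D.r t)) * (x t - D.r t - c * u t)
          ≤ ((D.g t (x t) - D.g t (D.r t)) - c * (D.g t (D.a t) - D.g t (D.r t))) * u t := by
        nlinarith [hkey]
      exact (mul_le_mul_iff_of_pos_right hut).mp (hstep1.trans hstep2)
    · have h1 : c ≤ (x t₀ - D.r t₀)/(D.a t₀ - D.r t₀) := min_le_right _ _
      have h2 := mul_le_mul_of_nonneg_right h1 hsep0.le
      rw [div_mul_cancel₀ _ (ne_of_gt hsep0)] at h2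
      have hu0 : u t₀ = D.a t₀ - D.r t₀ := rfl
      simp only [hu0]
      linarith
  -- Step 3 : x - a ≤ C u
  have hz2 : ∀ t ∈ Icc t₀ T, 0 ≤ C * u t - (x t - D.a t) := by
    apply barrier_fwd (fun t => C * u t - (x t - D.a t))
      (fun t => C * (D.g t (D.a t) - D.g t (D.r t)) - (D.g t (x t) - D.g t (D.a t))) K t₀ T
    · exact (continuousOn_const.mul (D.a_cont.sub D.r_cont).continuousOn).sub
        (hxc.sub (D.a_cont.continuousOn))
    · intro t ht
      exact (((D.sola t).sub (D.solr t)).const_mul C).sub ((hxd t ht).sub (D.sola t))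
    · intro t ht hneg
      have htI : t ∈ Icc t₀ T := ⟨ht.1.le, ht.2.le⟩
      have hut : 0 < u t := hupos t
      have hCu : 0 ≤ C * u t := mul_nonneg hCnn hut.le
      have hxa : D.a t < x t := by linarith
      have hch : D.g t (x t) - D.g t (D.a t) ≤ D.gx t (D.a t) * (x t - D.a t) :=
        D.chord_le t hxa.le
      have hu' : u t = D.a t - D.r t := rfl
      have hgxa : D.gx t (D.a t) * u t ≤ D.g t (D.a t) - D.g t (D.r t) := by
        have h := D.chord_ge t (show D.r t ≤ D.a t by linarith [hupos t, hu'])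
        rw [hu']
        linarith [h]
      -- ζ' u ≤ σn ζ
      have hkey : (D.g t (x t) - D.g t (D.a t)) * u t
          ≤ (D.g t (D.a t) - D.g t (D.r t)) * (x t - D.a t) := by
        have hζpos : 0 < x t - D.a t := by linarith
        calc (D.g t (x t) - D.g t (D.a t)) * u t
            ≤ (D.gx t (D.a t) * (x t - D.a t)) * u t :=
              mul_le_mul_of_nonneg_right hch hut.le
          _ = (D.gx t (D.a t) * u t) * (x t - D.a t) := by ring
          _ ≤ (D.g t (D.a t) - D.g t (D.r t)) * (x t - D.a t) :=
              mul_le_mul_of_nonneg_right hgxa hζpos.le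
      have hσt := hσ t htI
      have hKu : (D.g t (D.a t) - D.g t (D.r t)) ≤ K * u t := (le_abs_self _).trans hσt
      have hstep1 : (K * (C * u t - (x t - D.a t))) * u t
          ≤ (D.g t (D.a t) - D.g t (D.r t)) * (C * u t - (x t - D.a t)) := by
        calc (K * (C * u t - (x t - D.a t))) * u t
            = (K * u t) * (C * u t - (x t - D.a t)) := by ring
          _ ≤ (D.g t (D.a t) - D.g t (D.r t)) * (C * u t - (x t - D.a t)) :=
              mul_le_mul_of_nonpos_right hKu hneg.le
      have hstep2 : (D.g t (D.a t) - D.g t (D.r t)) * (C * u t - (x t - D.a t))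
          ≤ (C * (D.g t (D.a t) - D.g t (D.r t)) - (D.g t (x t) - D.g t (D.a t))) * u t := by
        nlinarith [hkey]
      exact (mul_le_mul_iff_of_pos_right hut).mp (hstep1.trans hstep2)
    · have h1 : x t₀ - D.a t₀ ≤ max (x t₀ - D.a t₀) 0 := le_max_left _ _
      have h2 : C * D.d = max (x t₀ - D.a t₀) 0 := by
        rw [hCdef, div_mul_cancel₀ _ (ne_of_gt D.dpos)]
      have h3 : C * D.d ≤ C * u t₀ := mul_le_mul_of_nonneg_left (hule t₀) hCnn
      linarith
  intro t ht
  constructor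
  · have h1 := hz1 t ht
    have h2 : c * D.d ≤ c * u t := mul_le_mul_of_nonneg_left (hule t) hcpos.le
    have : min 1 ((x t₀ - D.r t₀)/(D.a t₀ - D.r t₀)) * D.d = c * D.d := by rw [hcdef]
    linarith
  · have h1 := hz2 t ht
    have h2 : C * u t ≤ C * (2 * D.M) := mul_le_mul_of_nonneg_left (huple t) hCnn
    have : (max (x t₀ - D.a t₀) 0 / D.d) * (2*D.M) = C * (2*D.M) := by rw [hCdef]
    linarith

end ARData

section Clamp

lemma min_lip (a x y : ℝ) : |min a x - min a y| ≤ |x - y| := by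
  have aux : ∀ p q : ℝ, p ≤ q → min a q - min a p ≤ q - p := by
    intro p q h
    rcases le_total a p with h3 | h3
    · rw [min_eq_left h3, min_eq_left (h3.trans h)]; linarith
    · rw [min_eq_right h3]
      rcases le_total a q with h4 | h4
      · rw [min_eq_left h4]; linarith
      · rw [min_eq_right h4]
  have mono : ∀ p q : ℝ, p ≤ q → min a p ≤ min a q := fun p q h =>
    min_le_min (le_refl a) h
  rcases le_total x y with h | h
  · calc |min a x - min a y| = |min a y - min a x| := abs_sub_comm _ _
      _ = min a y - min a x := abs_of_nonneg (by linarith [mono x y h])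
      _ ≤ y - x := aux x y h
      _ ≤ |y - x| := le_abs_self _
      _ = |x - y| := abs_sub_comm _ _
  · calc |min a x - min a y| = min a x - min a y := abs_of_nonneg (by linarith [mono y x h])
      _ ≤ x - y := aux y x h
      _ ≤ |x - y| := le_abs_self _

lemma max_lip (a x y : ℝ) : |max a x - max a y| ≤ |x - y| := by
  have aux : ∀ p q : ℝ, p ≤ q → max a q - max a p ≤ q - p := by
    intro p q h
    rcases le_total a q with h3 | h3
    · rw [max_eq_right h3]
      rcases le_total a p with h4 | h4
      · rw [max_eq_right h4]
      · rw [max_eq_left h4]; linarith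
    · rw [max_eq_left h3, max_eq_left ((h.trans h3))]; linarith
  have mono : ∀ p q : ℝ, p ≤ q → max a p ≤ max a q := fun p q h =>
    max_le_max (le_refl a) h
  rcases le_total x y with h | h
  · calc |max a x - max a y| = |max a y - max a x| := abs_sub_comm _ _
      _ = max a y - max a x := abs_of_nonneg (by linarith [mono x y h])
      _ ≤ y - x := aux x y h
      _ ≤ |y - x| := le_abs_self _
      _ = |x - y| := abs_sub_comm _ _
  · calc |max a x - max a y| = max a x - max a y := abs_of_nonneg (by linarith [mono y x h])
      _ ≤ x - y := aux y x h
      _ ≤ |x - y| := le_abs_self _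

lemma clamp_lip (B ξ η : ℝ) :
    |max (-B) (min B ξ) - max (-B) (min B η)| ≤ |ξ - η| :=
  (max_lip (-B) (min B ξ) (min B η)).trans (min_lip B ξ η)

lemma clamp_abs_le {B : ℝ} (hB : 0 ≤ B) (ξ : ℝ) : |max (-B) (min B ξ)| ≤ B := by
  rw [abs_le]
  constructor
  · exact le_max_left _ _
  · exact max_le (by linarith) (min_le_left _ _)

lemma clamp_eq {B ξ : ℝ} (h : |ξ| ≤ B) : max (-B) (min B ξ) = ξ := by
  rw [abs_le] at h
  rw [min_eq_right h.2, max_eq_right h.1]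

end Clamp

namespace ARData

/-- Global forward existence of a bounded solution starting strictly above the repeller,
with a uniform separation from the repeller. -/
lemma exists_fwd (D : ARData) (t₀ x₀ : ℝ) (hx₀ : D.r t₀ < x₀) :
    ∃ X : ℝ → ℝ, X t₀ = x₀ ∧ ContinuousOn X (Ici t₀) ∧
      (∀ t > t₀, HasDerivAt X (D.g t (X t)) t) ∧
      (∀ t ≥ t₀, |X t| ≤ D.M + (max (x₀ - D.a t₀) 0 / D.d) * (2*D.M) + |x₀| + 3) ∧
      (∀ t ≥ t₀, min 1 ((x₀ - D.r t₀)/(D.a t₀ - D.r t₀)) * D.d ≤ X t - D.r t) := by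
  have hMnn := D.M_nonneg
  set Cc : ℝ := max (x₀ - D.a t₀) 0 / D.d with hCcdef
  have hCcnn : 0 ≤ Cc := div_nonneg (le_max_right _ _) D.dpos.le
  set B : ℝ := D.M + Cc * (2*D.M) + |x₀| + 3 with hBdef
  have hBpos : 0 < B := by
    have : 0 ≤ Cc * (2*D.M) := by positivity
    have := abs_nonneg x₀
    rw [hBdef]; linarith
  have hx₀B : |x₀| ≤ B - 3 := by
    have : 0 ≤ Cc * (2*D.M) := by positivity
    rw [hBdef]; linarith
  set cl : ℝ → ℝ := fun ξ => max (-B) (min B ξ) with hcldef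
  set v : ℝ → ℝ → ℝ := fun t ξ => D.g t (cl ξ) with hvdef
  -- Lipschitz bounds for v
  have hlipv : ∀ n : ℕ, ∃ K ≥ (0:ℝ), ∀ t ∈ Icc t₀ (t₀+(n:ℝ)), ∀ ξ η : ℝ,
      |v t ξ - v t η| ≤ K * |ξ - η| := by
    intro n
    obtain ⟨K, hK0, hK⟩ := D.toConcData.lipBound t₀ (t₀+(n:ℝ)) B
    refine ⟨K, hK0, fun t ht ξ η => ?_⟩
    calc |v t ξ - v t η| ≤ K * |cl ξ - cl η| :=
          hK t ht _ _ (clamp_abs_le hBpos.le ξ) (clamp_abs_le hBpos.le η)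
      _ ≤ K * |ξ - η| := mul_le_mul_of_nonneg_left (clamp_lip B ξ η) hK0
  -- uniform bound for v
  have hbdv : ∀ n : ℕ, ∃ Cb ≥ (0:ℝ), ∀ t ∈ Icc t₀ (t₀+(n:ℝ)), ∀ ξ : ℝ, |v t ξ| ≤ Cb := by
    intro n
    have hcomp : IsCompact ((Icc t₀ (t₀+(n:ℝ))) ×ˢ (Icc (-B) B)) :=
      isCompact_Icc.prod isCompact_Icc
    obtain ⟨C2, hC2⟩ := hcomp.exists_bound_of_continuousOn D.cont.continuousOn
    refine ⟨max C2 0, le_max_right _ _, fun t ht ξ => ?_⟩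
    have hmem : (t, cl ξ) ∈ (Icc t₀ (t₀+(n:ℝ))) ×ˢ (Icc (-B) B) := by
      refine ⟨ht, ?_⟩
      rw [Set.mem_Icc, ← abs_le]
      exact clamp_abs_le hBpos.le ξ
    have := hC2 (t, cl ξ) hmem
    rw [Real.norm_eq_abs] at this
    exact this.trans (le_max_left _ _)
  -- Picard-Lindelöf on each [t₀, t₀+n]
  have hsol : ∀ n : ℕ, ∃ f : ℝ → ℝ, f t₀ = x₀ ∧ ∀ t ∈ Icc t₀ (t₀+(n:ℝ)),
      HasDerivWithinAt f (v t (f t)) (Icc t₀ (t₀+(n:ℝ))) t := by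
    intro n
    obtain ⟨K, hK0, hK⟩ := hlipv n
    obtain ⟨Cb, hCb0, hCb⟩ := hbdv n
    have hmem : t₀ ∈ Icc t₀ (t₀+(n:ℝ)) :=
      ⟨le_refl t₀, by linarith [(Nat.cast_nonneg n : (0:ℝ) ≤ n)]⟩
    have hPL : IsPicardLindelof v (tmin := t₀) (tmax := t₀+(n:ℝ)) ⟨t₀, hmem⟩ x₀
        (Cb * n + 1).toNNReal 0 Cb.toNNReal K.toNNReal := by
      constructor
      · intro t ht
        apply LipschitzOnWith.of_dist_le_mul
        intro ξ _ η _
        rw [Real.dist_eq, Real.dist_eq, Real.coe_toNNReal K hK0]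
        exact hK t ht ξ η
      · intro ξ _
        exact (D.cont.comp (continuous_id.prodMk continuous_const)).continuousOn
      · intro t ht ξ _
        rw [Real.norm_eq_abs, Real.coe_toNNReal Cb hCb0]
        exact hCb t ht ξ
      · show (Cb.toNNReal : ℝ) * max (t₀ + (n:ℝ) - t₀) (t₀ - t₀)
          ≤ ((Cb * n + 1).toNNReal : ℝ) - ((0:NNReal):ℝ)
        have h1 : t₀ + (n:ℝ) - t₀ = (n:ℝ) := by ring
        have h2 : t₀ - t₀ = (0:ℝ) := by ring
        rw [Real.coe_toNNReal Cb hCb0, Real.coe_toNNReal _ (by positivity), NNReal.coe_zero,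
          sub_zero, h1, h2, max_eq_left (Nat.cast_nonneg n : (0:ℝ) ≤ n)]
        linarith
    obtain ⟨α, hα0, hα⟩ := hPL.exists_eq_forall_mem_Icc_hasDerivWithinAt₀
    exact ⟨α, hα0, hα⟩
  choose f hf0 hfd using hsol
  -- consistency
  have hcons : ∀ (m n : ℕ), m ≤ n → ∀ t ∈ Icc t₀ (t₀ + (m:ℝ)), f m t = f n t := by
    intro m n hmn
    obtain ⟨K, hK0, hK⟩ := hlipv n
    have hmn' : t₀ + (m:ℝ) ≤ t₀ + (n:ℝ) := by
      have : (m:ℝ) ≤ n := Nat.cast_le.mpr hmn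
      linarith
    have hsub : Icc t₀ (t₀ + (m:ℝ)) ⊆ Icc t₀ (t₀ + (n:ℝ)) := Icc_subset_Icc_right hmn'
    apply uniq_on v K t₀ (t₀ + (m:ℝ))
    · exact fun t ht => (hfd m t ht).continuousWithinAt
    · exact fun t ht => ((hfd n t (hsub ht)).continuousWithinAt).mono hsub
    · exact fun t ht => (hfd m t ⟨ht.1.le, ht.2.le⟩).hasDerivAt (Icc_mem_nhds ht.1 ht.2)
    · exact fun t ht => (hfd n t (hsub ⟨ht.1.le, ht.2.le⟩)).hasDerivAt
        (Icc_mem_nhds ht.1 (lt_of_lt_of_le ht.2 hmn'))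
    · exact fun t ht => hK t (hsub ⟨ht.1.le, ht.2.le⟩) _ _
    · exact (hf0 m).trans (hf0 n).symm
  -- the glued global solution
  set X : ℝ → ℝ := fun t => if t ≤ t₀ then x₀ else f (⌊t - t₀⌋₊ + 1) t with hXdef
  have hX0 : X t₀ = x₀ := by
    show (if t₀ ≤ t₀ then x₀ else f (⌊t₀ - t₀⌋₊ + 1) t₀) = x₀
    rw [if_pos (le_refl t₀)]
  have hXeq : ∀ n : ℕ, ∀ t ∈ Icc t₀ (t₀ + (n:ℝ)), X t = f n t := by
    intro n t ht
    by_cases h : t ≤ t₀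
    · have ht0 : t = t₀ := le_antisymm h ht.1
      show (if t ≤ t₀ then x₀ else f (⌊t - t₀⌋₊ + 1) t) = f n t
      rw [if_pos h, ht0, hf0 n]
    · show (if t ≤ t₀ then x₀ else f (⌊t - t₀⌋₊ + 1) t) = f n t
      rw [if_neg h]
      push_neg at h
      have htt : 0 ≤ t - t₀ := by linarith
      have hk : t ∈ Icc t₀ (t₀ + ((⌊t - t₀⌋₊ + 1 : ℕ):ℝ)) := by
        refine ⟨ht.1, ?_⟩
        push_cast
        have := Nat.lt_floor_add_one (t - t₀)
        linarith
      rcases le_total (⌊t - t₀⌋₊ + 1) n with hmn | hmn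
      · exact hcons _ n hmn t hk
      · exact (hcons n _ hmn t ht).symm
  have hXd : ∀ t > t₀, HasDerivAt X (v t (X t)) t := by
    intro t ht
    set n : ℕ := ⌊t - t₀⌋₊ + 2 with hndef
    have h1 : t < t₀ + (n:ℝ) := by
      rw [hndef]
      push_cast
      have := Nat.lt_floor_add_one (t - t₀)
      linarith
    have hev : X =ᶠ[nhds t] f n := by
      filter_upwards [Ioo_mem_nhds ht h1] with s hs
      exact hXeq n s ⟨hs.1.le, hs.2.le⟩
    have hd := (hfd n t ⟨ht.le, h1.le⟩).hasDerivAt (Icc_mem_nhds ht h1)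
    have h2 : HasDerivAt X (v t (f n t)) t := hd.congr_of_eventuallyEq hev
    rwa [← hXeq n t ⟨ht.le, h1.le⟩] at h2
  have hXc : ContinuousOn X (Ici t₀) := by
    intro t ht
    rcases eq_or_lt_of_le (Set.mem_Ici.mp ht) with heq | hlt
    · have h01 : t₀ ∈ Icc t₀ (t₀ + ((1:ℕ):ℝ)) := ⟨le_refl _, by norm_num⟩
      have hcw : ContinuousWithinAt (f 1) (Ici t₀) t₀ :=
        ((hfd 1 t₀ h01).continuousWithinAt).mono_of_mem_nhdsWithin
          (Icc_mem_nhdsGE_of_mem ⟨le_refl _, by norm_num⟩)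
      rw [← heq]
      apply hcw.congr_of_eventuallyEq _ (hXeq 1 t₀ h01)
      filter_upwards [Icc_mem_nhdsGE_of_mem
        (show t₀ ∈ Ico t₀ (t₀ + ((1:ℕ):ℝ)) from ⟨le_refl _, by norm_num⟩)] with s hs
      exact hXeq 1 s hs
    · exact (hXd t hlt).continuousAt.continuousWithinAt
  -- exit-time argument : |X| ≤ B - 2 on [t₀, ∞)
  have hB2 : ∀ T ≥ t₀, ∀ t ∈ Icc t₀ T, |X t| ≤ B - 2 := by
    intro T hT
    by_contra hcontra
    push_neg at hcontra
    obtain ⟨ts, hts, hgt⟩ := hcontra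
    have hXcc : ContinuousOn X (Icc t₀ ts) := hXc.mono (Icc_subset_Ici_self)
    have hclosed : IsClosed {t ∈ Icc t₀ ts | B - 2 ≤ |X t|} := by
      have hset : {t ∈ Icc t₀ ts | B - 2 ≤ |X t|}
          = Icc t₀ ts ∩ (fun t => |X t|) ⁻¹' (Ici (B-2)) := by
        ext τ; simp [Set.mem_inter_iff]
      rw [hset]
      exact (hXcc.abs).preimage_isClosed_of_isClosed isClosed_Icc isClosed_Ici
    have hne : {t ∈ Icc t₀ ts | B - 2 ≤ |X t|}.Nonempty := ⟨ts, ⟨⟨hts.1, le_refl _⟩, hgt.le⟩⟩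
    have hbdd : BddBelow {t ∈ Icc t₀ ts | B - 2 ≤ |X t|} := ⟨t₀, fun s hs => hs.1.1⟩
    obtain ⟨τ, hτmem, hτlb⟩ : ∃ τ, τ ∈ {t ∈ Icc t₀ ts | B - 2 ≤ |X t|} ∧
        ∀ s ∈ {t ∈ Icc t₀ ts | B - 2 ≤ |X t|}, τ ≤ s :=
      ⟨_, hclosed.csInf_mem hne hbdd, fun s hs => csInf_le hbdd hs⟩
    have hτ0 : t₀ < τ := by
      rcases eq_or_lt_of_le hτmem.1.1 with heq | h
      · exfalso
        have := hτmem.2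
        rw [← heq, hX0] at this
        linarith
      · exact h
    have hlt' : ∀ s ∈ Ico t₀ τ, |X s| < B - 2 := by
      intro s hs
      by_contra hcontra2
      push_neg at hcontra2
      have hmm : s ∈ {t ∈ Icc t₀ ts | B - 2 ≤ |X t|} :=
        ⟨⟨hs.1, hs.2.le.trans hτmem.1.2⟩, hcontra2⟩
      have := hτlb s hmm
      linarith [hs.2]
    have hle' : ∀ s ∈ Icc t₀ τ, |X s| ≤ B - 2 := by
      have hCl : IsClosed {t ∈ Icc t₀ τ | |X t| ≤ B - 2} := by
        have hXcc2 : ContinuousOn X (Icc t₀ τ) := hXc.mono (Icc_subset_Ici_self)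
        have hset : {t ∈ Icc t₀ τ | |X t| ≤ B - 2}
            = Icc t₀ τ ∩ (fun t => |X t|) ⁻¹' (Iic (B-2)) := by
          ext σ; simp [Set.mem_inter_iff]
        rw [hset]
        exact (hXcc2.abs).preimage_isClosed_of_isClosed isClosed_Icc isClosed_Iic
      have hsub2 : Ico t₀ τ ⊆ {t ∈ Icc t₀ τ | |X t| ≤ B - 2} := fun s hs =>
        ⟨⟨hs.1, hs.2.le⟩, (hlt' s hs).le⟩
      intro s hs
      rcases lt_or_eq_of_le hs.2 with h | h
      · exact (hlt' s ⟨hs.1, h⟩).le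
      · have hτin : τ ∈ {t ∈ Icc t₀ τ | |X t| ≤ B - 2} := by
          have h1 : τ ∈ closure (Ico t₀ τ) := by
            rw [closure_Ico (ne_of_lt hτ0)]
            exact ⟨hτ0.le, le_refl _⟩
          exact (hCl.closure_subset_iff.mpr hsub2) h1
        rw [h]
        exact hτin.2
    -- on [t₀, τ] X solves the original equation
    have hgder : ∀ s ∈ Ioo t₀ τ, HasDerivAt X (D.g s (X s)) s := by
      intro s hs
      have h1 := hXd s hs.1
      have h2 : v s (X s) = D.g s (X s) := by
        rw [hvdef]
        dsimp only
        rw [hcldef]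
        dsimp only
        rw [clamp_eq ((hle' s ⟨hs.1.le, hs.2.le⟩).trans (by linarith))]
      rwa [h2] at h1
    have hap := D.apriori t₀ τ X hτ0.le (hXc.mono (Icc_subset_Ici_self)) hgder
      (by rw [hX0]; exact hx₀)
    have hapτ := hap τ ⟨hτ0.le, le_refl _⟩
    have h1 : D.r τ ≤ X τ := by
      have := hapτ.1
      have hcnn : 0 ≤ min 1 ((X t₀ - D.r t₀)/(D.a t₀ - D.r t₀)) * D.d := by
        apply mul_nonneg _ D.dpos.le
        apply le_min (by norm_num)
        apply div_nonneg _ (by linarith [D.dpos, D.sep t₀])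
        rw [hX0]; linarith
      linarith
    have h2 : X τ ≤ D.a τ + Cc * (2*D.M) := by
      have := hapτ.2
      rw [hX0] at this
      exact this
    have h3 : |X τ| ≤ B - 3 := by
      rw [abs_le]
      constructor
      · have := (D.hM τ).2
        rw [abs_le] at this
        rw [hBdef]
        have h4 : 0 ≤ Cc * (2*D.M) := by positivity
        have h5 := abs_nonneg x₀
        linarith [this.1]
      · have := (D.hM τ).1
        rw [abs_le] at this
        rw [hBdef]
        have h5 := abs_nonneg x₀
        linarith [this.2]
    linarith [hτmem.2]
  have hXb : ∀ t ≥ t₀, |X t| ≤ B - 2 := fun t ht => hB2 t ht t ⟨ht, le_refl _⟩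
  have hXgd : ∀ t > t₀, HasDerivAt X (D.g t (X t)) t := by
    intro t ht
    have h1 := hXd t ht
    have h2 : v t (X t) = D.g t (X t) := by
      rw [hvdef]
      dsimp only
      rw [hcldef]
      dsimp only
      rw [clamp_eq ((hXb t ht.le).trans (by linarith))]
    rwa [h2] at h1
  refine ⟨X, hX0, hXc, hXgd, ?_, ?_⟩
  · intro t ht
    have := hXb t ht
    rw [hBdef] at this
    rw [hCcdef] at this
    linarith
  · intro t ht
    have hap := D.apriori t₀ t X ht (hXc.mono (Icc_subset_Ici_self))
      (fun s hs => hXgd s hs.1) (by rw [hX0]; exact hx₀)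
    have := (hap t ⟨ht, le_refl _⟩).1
    rw [hX0] at this
    exact this

end ARData

/-- Gluing two solutions continuously at `t₀`. -/
lemma glue_continuous (t₀ : ℝ) (f g : ℝ → ℝ) (hfc : ContinuousOn f (Iic t₀))
    (hgc : ContinuousOn g (Ici t₀)) (hfg : f t₀ = g t₀) :
    Continuous (fun t => if t ≤ t₀ then f t else g t) := by
  rw [continuous_iff_continuousAt]
  intro t
  rcases lt_trichotomy t t₀ with ht | heqt | ht
  · have hca : ContinuousAt f t := (hfc t ht.le).continuousAt (Iic_mem_nhds ht)
    apply hca.congr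
    filter_upwards [Iio_mem_nhds ht] with s (hs : s < t₀)
    rw [if_pos hs.le]
  · rw [heqt]
    rw [continuousAt_iff_continuous_left_right]
    constructor
    · apply (hfc t₀ (le_refl t₀)).congr
      · intro s hs
        rw [if_pos (mem_Iic.mp hs)]
      · rw [if_pos (le_refl t₀)]
    · apply (hgc t₀ (le_refl t₀)).congr
      · intro s hs
        rcases eq_or_lt_of_le (mem_Ici.mp hs) with rfl | h
        · rw [if_pos (le_refl t₀)]; exact hfg
        · rw [if_neg (not_le.mpr h)]
      · rw [if_pos (le_refl t₀)]; exact hfg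
  · have hca : ContinuousAt g t := (hgc t ht.le).continuousAt (Ici_mem_nhds ht)
    apply hca.congr
    filter_upwards [Ioi_mem_nhds ht] with s (hs : t₀ < s)
    rw [if_neg (not_le.mpr hs)]

theorem switching_tracking_criterion'
    (gm gp gmx gpx : ℝ → ℝ → ℝ) (t₀ : ℝ)
    (hcm : Continuous fun p : ℝ × ℝ => gm p.1 p.2)
    (hcp : Continuous fun p : ℝ × ℝ => gp p.1 p.2)
    (hdm : ∀ t x, HasDerivAt (gm t) (gmx t x) x)
    (hdp : ∀ t x, HasDerivAt (gp t) (gpx t x) x)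
    (hconcm : ∀ j : ℕ, ∃ δ > (0:ℝ), ∀ t : ℝ,
      ∀ x₁ ∈ Set.Icc (-(j:ℝ)) (j:ℝ), ∀ x₂ ∈ Set.Icc (-(j:ℝ)) (j:ℝ), x₁ ≠ x₂ →
        (gmx t x₂ - gmx t x₁) / (x₂ - x₁) < -δ)
    (hconcp : ∀ j : ℕ, ∃ δ > (0:ℝ), ∀ t : ℝ,
      ∀ x₁ ∈ Set.Icc (-(j:ℝ)) (j:ℝ), ∀ x₂ ∈ Set.Icc (-(j:ℝ)) (j:ℝ), x₁ ≠ x₂ →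
        (gpx t x₂ - gpx t x₁) / (x₂ - x₁) < -δ)
    (amm rmm amp rmp : ℝ → ℝ)
    (hsolam : ∀ t, HasDerivAt amm (gm t (amm t)) t)
    (hsolrm : ∀ t, HasDerivAt rmm (gm t (rmm t)) t)
    (hbddm : ∃ M, ∀ t, |amm t| ≤ M ∧ |rmm t| ≤ M)
    (hsepm : ∃ d > (0:ℝ), ∀ t, d ≤ amm t - rmm t)
    (hsolap : ∀ t, HasDerivAt amp (gp t (amp t)) t)
    (hsolrp : ∀ t, HasDerivAt rmp (gp t (rmp t)) t)
    (hbddp : ∃ M, ∀ t, |amp t| ≤ M ∧ |rmp t| ≤ M)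
    (hsepp : ∃ d > (0:ℝ), ∀ t, d ≤ amp t - rmp t) :
    (amm t₀ > rmp t₀ →
      ∃ x y : ℝ → ℝ, SwitchSol gm gp t₀ x ∧ SwitchSol gm gp t₀ y ∧
        (∃ M, ∀ t, |x t| ≤ M ∧ |y t| ≤ M) ∧
        (∃ d > (0:ℝ), ∀ t, d ≤ |x t - y t|)) ∧
    (amm t₀ = rmp t₀ →
      ∃ x : ℝ → ℝ, (SwitchSol gm gp t₀ x ∧ (∃ M, ∀ t, |x t| ≤ M)) ∧
        ∀ y : ℝ → ℝ, SwitchSol gm gp t₀ y → (∃ M, ∀ t, |y t| ≤ M) → y = x) ∧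
    (amm t₀ < rmp t₀ →
      ¬ ∃ x : ℝ → ℝ, SwitchSol gm gp t₀ x ∧ (∃ M, ∀ t, |x t| ≤ M)) := by
  obtain ⟨Mm, hMm⟩ := hbddm
  obtain ⟨dm, hdm0, hsepm'⟩ := hsepm
  obtain ⟨Mp, hMp⟩ := hbddp
  obtain ⟨dp, hdp0, hsepp'⟩ := hsepp
  set Dm : ARData :=
    ({ g := gm, gx := gmx, cont := hcm, deriv := hdm, conc := hconcm,
       a := amm, r := rmm, sola := hsolam, solr := hsolrm, M := Mm, hM := hMm,
       d := dm, dpos := hdm0, sep := hsepm' } : ARData) with hDmdef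
  set Dp : ARData :=
    ({ g := gp, gx := gpx, cont := hcp, deriv := hdp, conc := hconcp,
       a := amp, r := rmp, sola := hsolap, solr := hsolrp, M := Mp, hM := hMp,
       d := dp, dpos := hdp0, sep := hsepp' } : ARData) with hDpdef
  have h2t : 2 * t₀ - t₀ = t₀ := by ring
  have hfa : (Dm.flip t₀).a = fun τ => -(rmm (2*t₀ - τ)) := rfl
  have hfr : (Dm.flip t₀).r = fun τ => -(amm (2*t₀ - τ)) := rfl
  have hfg : (Dm.flip t₀).g = fun τ ξ => gm (2*t₀ - τ) (-ξ) := rfl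
  have hfd : (Dm.flip t₀).d = dm := rfl
  have hfM : (Dm.flip t₀).M = Mm := rfl
  -- transforming backward gm-solutions into forward solutions of the flipped field
  have hflipsol : ∀ x : ℝ → ℝ, (∀ t < t₀, HasDerivAt x (gm t (x t)) t) →
      ∀ τ > t₀, HasDerivAt (fun τ => -(x (2*t₀ - τ)))
        ((Dm.flip t₀).g τ (-(x (2*t₀ - τ)))) τ := by
    intro x hxd τ hτ
    have hin : HasDerivAt (fun τ : ℝ => 2*t₀ - τ) (-1) τ := by
      simpa using (hasDerivAt_id τ).const_sub (2*t₀)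
    have h1 : 2*t₀ - τ < t₀ := by linarith
    have h2 := ((hxd (2*t₀ - τ) h1).comp τ hin).neg
    have h3 : (Dm.flip t₀).g τ (-(x (2*t₀ - τ))) = gm (2*t₀ - τ) (x (2*t₀ - τ)) := by
      rw [hfg]
      dsimp only
      rw [neg_neg]
    rw [h3]
    simpa [Function.comp_def, Pi.neg_def] using h2
  have hflipcont : ∀ x : ℝ → ℝ, Continuous x →
      Continuous (fun τ => -(x (2*t₀ - τ))) := by
    intro x hxc
    exact (hxc.comp (continuous_const.sub continuous_id)).neg
  -- pinching of bounded switched solutions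
  have hpinch : ∀ x : ℝ → ℝ, SwitchSol gm gp t₀ x → ∀ M0 : ℝ, (∀ t, |x t| ≤ M0) →
      rmp t₀ ≤ x t₀ ∧ x t₀ ≤ amm t₀ := by
    intro x hx M0 hM0
    constructor
    · exact Dp.start_above t₀ M0 x hx.1.continuousOn hx.2.2 (fun t _ => hM0 t)
    · have h1 := (Dm.flip t₀).start_above t₀ M0 (fun τ => -(x (2*t₀ - τ)))
        (hflipcont x hx.1).continuousOn
        (hflipsol x hx.2.1)
        (fun t _ => by rw [abs_neg]; exact hM0 _)
      rw [hfr] at h1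
      dsimp only at h1
      rw [h2t] at h1
      linarith
  refine ⟨?_, ?_, ?_⟩
  · -- Case A : two separated bounded solutions
    intro hgt
    obtain ⟨X, hX0, hXc, hXd, hXB, hXsep⟩ := Dp.exists_fwd t₀ (amm t₀) hgt
    have hflipr0 : (Dm.flip t₀).r t₀ = -(amm t₀) := by rw [hfr]; dsimp only; rw [h2t]
    have hflipa0 : (Dm.flip t₀).a t₀ = -(rmm t₀) := by rw [hfa]; dsimp only; rw [h2t]
    obtain ⟨Y, hY0, hYc, hYd, hYB, hYsep⟩ := (Dm.flip t₀).exists_fwd t₀ (-(rmp t₀))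
      (by rw [hflipr0]; linarith)
    set x : ℝ → ℝ := fun t => if t ≤ t₀ then amm t else X t with hxdef
    set y : ℝ → ℝ := fun t => if t ≤ t₀ then -(Y (2*t₀ - t)) else rmp t with hydef
    have hxt : ∀ t ≤ t₀, x t = amm t := fun t ht => if_pos ht
    have hxt' : ∀ t > t₀, x t = X t := fun t ht => if_neg (not_le.mpr ht)
    have hyt : ∀ t ≤ t₀, y t = -(Y (2*t₀ - t)) := fun t ht => if_pos ht
    have hyt' : ∀ t > t₀, y t = rmp t := fun t ht => if_neg (not_le.mpr ht)
    have hYt₀ : -(Y (2*t₀ - t₀)) = rmp t₀ := by rw [h2t, hY0, neg_neg]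
    have hxsol : SwitchSol gm gp t₀ x := by
      refine ⟨?_, ?_, ?_⟩
      · exact glue_continuous t₀ amm X Dm.a_cont.continuousOn hXc hX0.symm
      · intro t ht
        have hev : x =ᶠ[nhds t] amm := by
          filter_upwards [Iio_mem_nhds ht] with s (hs : s < t₀)
          exact hxt s hs.le
        have h1 := (hsolam t).congr_of_eventuallyEq hev
        rwa [hxt t ht.le]
      · intro t ht
        have hev : x =ᶠ[nhds t] X := by
          filter_upwards [Ioi_mem_nhds ht] with s (hs : t₀ < s)
          exact hxt' s hs
        have h1 := (hXd t ht).congr_of_eventuallyEq hev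
        rwa [hxt' t ht]
    have hYcompc : ContinuousOn (fun t => -(Y (2*t₀ - t))) (Iic t₀) := by
      apply ContinuousOn.neg
      apply hYc.comp ((continuous_const.sub continuous_id).continuousOn)
      intro s hs
      simp only [Set.mem_Iic] at hs
      simp only [Set.mem_Ici, id_eq, Pi.sub_apply]
      linarith
    have hysol : SwitchSol gm gp t₀ y := by
      refine ⟨?_, ?_, ?_⟩
      · exact glue_continuous t₀ _ rmp hYcompc Dp.r_cont.continuousOn hYt₀
      · intro t ht
        have hτ : t₀ < 2*t₀ - t := by linarith
        have hin : HasDerivAt (fun t : ℝ => 2*t₀ - t) (-1) t := by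
          simpa using (hasDerivAt_id t).const_sub (2*t₀)
        have h1 := ((hYd (2*t₀ - t) hτ).comp t hin).neg
        have hev : y =ᶠ[nhds t] fun t => -(Y (2*t₀ - t)) := by
          filter_upwards [Iio_mem_nhds ht] with s (hs : s < t₀)
          exact hyt s hs.le
        have hval : (Dm.flip t₀).g (2*t₀ - t) (Y (2*t₀ - t)) = gm t (y t) := by
          rw [hfg]
          dsimp only
          rw [show 2*t₀ - (2*t₀ - t) = t by ring, ← hyt t ht.le]
        have h2 : HasDerivAt (fun t => -(Y (2*t₀ - t))) (gm t (y t)) t := by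
          rw [← hval]
          simpa [Function.comp_def, Pi.neg_def] using h1
        exact h2.congr_of_eventuallyEq hev
      · intro t ht
        have hev : y =ᶠ[nhds t] rmp := by
          filter_upwards [Ioi_mem_nhds ht] with s (hs : t₀ < s)
          exact hyt' s hs
        have h1 := (hsolrp t).congr_of_eventuallyEq hev
        rwa [hyt' t ht]
    refine ⟨x, y, hxsol, hysol, ?_, ?_⟩
    · set BX : ℝ := Dp.M + (max (amm t₀ - Dp.a t₀) 0 / Dp.d) * (2*Dp.M) + |amm t₀| + 3
        with hBXdef
      set BY : ℝ := (Dm.flip t₀).M + (max (-(rmp t₀) - (Dm.flip t₀).a t₀) 0 /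
        (Dm.flip t₀).d) * (2*(Dm.flip t₀).M) + |(-(rmp t₀))| + 3 with hBYdef
      refine ⟨max (max Mm BX) (max BY Mp), fun t => ⟨?_, ?_⟩⟩
      · rcases le_or_gt t t₀ with h | h
        · rw [hxt t h]
          exact ((hMm t).1).trans ((le_max_left _ _).trans (le_max_left _ _))
        · rw [hxt' t h]
          exact (hXB t h.le).trans ((le_max_right _ _).trans (le_max_left _ _))
      · rcases le_or_gt t t₀ with h | h
        · rw [hyt t h, abs_neg]
          have hτ : t₀ ≤ 2*t₀ - t := by linarith
          exact (hYB (2*t₀ - t) hτ).trans ((le_max_left _ _).trans (le_max_right _ _))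
        · rw [hyt' t h]
          exact ((hMp t).2).trans ((le_max_right _ _).trans (le_max_right _ _))
    · set ep : ℝ := min 1 ((amm t₀ - Dp.r t₀)/(Dp.a t₀ - Dp.r t₀)) * Dp.d with hepdef
      set em : ℝ := min 1 ((-(rmp t₀) - (Dm.flip t₀).r t₀)/((Dm.flip t₀).a t₀ -
        (Dm.flip t₀).r t₀)) * (Dm.flip t₀).d with hemdef
      have hDpr : Dp.r t₀ = rmp t₀ := rfl
      have hDpa : Dp.a t₀ = amp t₀ := rfl
      have hep : 0 < ep := by
        rw [hepdef]
        apply mul_pos _ Dp.dpos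
        apply lt_min one_pos
        apply div_pos
        · rw [hDpr]; linarith
        · have := Dp.dpos
          have := Dp.sep t₀
          linarith
      have hem : 0 < em := by
        rw [hemdef]
        apply mul_pos _ (Dm.flip t₀).dpos
        apply lt_min one_pos
        apply div_pos
        · rw [hflipr0]; linarith
        · have := (Dm.flip t₀).dpos
          have := (Dm.flip t₀).sep t₀
          linarith
      refine ⟨min ep em, lt_min hep hem, fun t => ?_⟩
      have key : min ep em ≤ x t - y t := by
        rcases le_or_gt t t₀ with h | h
        · rw [hxt t h, hyt t h]
          have hτ : t₀ ≤ 2*t₀ - t := by linarith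
          have h1 := hYsep (2*t₀ - t) hτ
          have h2 : (Dm.flip t₀).r (2*t₀ - t) = -(amm t) := by
            rw [hfr]
            dsimp only
            rw [show 2*t₀ - (2*t₀ - t) = t by ring]
          rw [h2] at h1
          have h3 := min_le_right ep em
          linarith
        · rw [hxt' t h, hyt' t h]
          have h1 := hXsep t h.le
          have h2 : Dp.r t = rmp t := rfl
          rw [h2] at h1
          have h3 := min_le_left ep em
          linarith
      exact key.trans (le_abs_self _)
  · -- Case B : unique bounded solution
    intro heq
    set xs : ℝ → ℝ := fun t => if t ≤ t₀ then amm t else rmp t with hxsdef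
    have hxst : ∀ t ≤ t₀, xs t = amm t := fun t ht => if_pos ht
    have hxst' : ∀ t > t₀, xs t = rmp t := fun t ht => if_neg (not_le.mpr ht)
    have hxssol : SwitchSol gm gp t₀ xs := by
      refine ⟨?_, ?_, ?_⟩
      · exact glue_continuous t₀ amm rmp Dm.a_cont.continuousOn Dp.r_cont.continuousOn heq
      · intro t ht
        have hev : xs =ᶠ[nhds t] amm := by
          filter_upwards [Iio_mem_nhds ht] with s (hs : s < t₀)
          exact hxst s hs.le
        have h1 := (hsolam t).congr_of_eventuallyEq hev
        rwa [hxst t ht.le]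
      · intro t ht
        have hev : xs =ᶠ[nhds t] rmp := by
          filter_upwards [Ioi_mem_nhds ht] with s (hs : t₀ < s)
          exact hxst' s hs
        have h1 := (hsolrp t).congr_of_eventuallyEq hev
        rwa [hxst' t ht]
    refine ⟨xs, ⟨hxssol, ⟨max Mm Mp, fun t => ?_⟩⟩, ?_⟩
    · rcases le_or_gt t t₀ with h | h
      · rw [hxst t h]
        exact ((hMm t).1).trans (le_max_left _ _)
      · rw [hxst' t h]
        exact ((hMp t).2).trans (le_max_right _ _)
    · rintro y hy ⟨My, hMy⟩
      obtain ⟨hy1, hy2⟩ := hpinch y hy My hMy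
      have hyt₀ : y t₀ = rmp t₀ := le_antisymm (by linarith) hy1
      have hfwd : ∀ t ≥ t₀, y t = rmp t := by
        intro t ht
        obtain ⟨K, hK0, hK⟩ := Dp.toConcData.lipBound t₀ t (max My Mp)
        have h := uniq_on gp K t₀ t y rmp
          hy.1.continuousOn Dp.r_cont.continuousOn
          (fun s hs => hy.2.2 s hs.1) (fun s _ => hsolrp s)
          (fun s hs => hK s ⟨hs.1.le, hs.2.le⟩ _ _
            ((hMy s).trans (le_max_left _ _)) (((hMp s).2).trans (le_max_right _ _)))
          hyt₀
        exact h t ⟨ht, le_refl t⟩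
      have hbwd : ∀ t ≤ t₀, y t = amm t := by
        intro t ht
        have hτ : t₀ ≤ 2*t₀ - t := by linarith
        obtain ⟨K, hK0, hK⟩ := (Dm.flip t₀).toConcData.lipBound t₀ (2*t₀ - t) (max My Mm)
        have h := uniq_on (Dm.flip t₀).g K t₀ (2*t₀ - t)
          (fun τ => -(y (2*t₀ - τ))) (fun τ => -(amm (2*t₀ - τ)))
          (hflipcont y hy.1).continuousOn
          (hflipcont amm Dm.a_cont).continuousOn
          (fun s hs => hflipsol y hy.2.1 s hs.1)
          (fun s hs => hflipsol amm (fun u _ => hsolam u) s hs.1)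
          (fun s hs => hK s ⟨hs.1.le, hs.2.le⟩ _ _
            (by rw [abs_neg]; exact (hMy _).trans (le_max_left _ _))
            (by rw [abs_neg]; exact ((hMm _).1).trans (le_max_right _ _)))
          (by show -(y (2*t₀ - t₀)) = -(amm (2*t₀ - t₀)); rw [h2t, hyt₀, heq])
        have h2 := h (2*t₀ - t) ⟨hτ, le_refl _⟩
        rw [show 2*t₀ - (2*t₀ - t) = t by ring] at h2
        linarith [neg_injective h2]
      funext t
      rcases le_or_gt t t₀ with h | h
      · rw [hbwd t h, hxst t h]
      · rw [hfwd t h.le, hxst' t h]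
  · -- Case C : no bounded solutions
    intro hlt
    rintro ⟨x, hx, M0, hM0⟩
    obtain ⟨h1, h2⟩ := hpinch x hx M0 hM0
    linarith

/-- tipping/tracking criterion for switching at time `t₀` between two
concave equations with attractor–repeller pairs `(ã₋, r̃₋)` and `(ã₊, r̃₊)`: the
switched equation has two uniformly separated bounded solutions if `ã₋(t₀) > r̃₊(t₀)`,
exactly one bounded solution if `ã₋(t₀) = r̃₊(t₀)`, and none if `ã₋(t₀) < r̃₊(t₀)`. -/
theorem switching_tracking_criterion
    (gm gp gmx gpx : ℝ → ℝ → ℝ) (t₀ : ℝ)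
    (hcm : Continuous fun p : ℝ × ℝ => gm p.1 p.2)
    (hcp : Continuous fun p : ℝ × ℝ => gp p.1 p.2)
    (hdm : ∀ t x, HasDerivAt (gm t) (gmx t x) x)
    (hdp : ∀ t x, HasDerivAt (gp t) (gpx t x) x)
    (hcoerm : ∃ δ > (0:ℝ), ∃ ρ₀ > (0:ℝ), ∀ t x : ℝ, ρ₀ ≤ |x| → gm t x ≤ -δ * |x|)
    (hcoerp : ∃ δ > (0:ℝ), ∃ ρ₀ > (0:ℝ), ∀ t x : ℝ, ρ₀ ≤ |x| → gp t x ≤ -δ * |x|)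
    (hconcm : ∀ j : ℕ, ∃ δ > (0:ℝ), ∀ t : ℝ,
      ∀ x₁ ∈ Set.Icc (-(j:ℝ)) (j:ℝ), ∀ x₂ ∈ Set.Icc (-(j:ℝ)) (j:ℝ), x₁ ≠ x₂ →
        (gmx t x₂ - gmx t x₁) / (x₂ - x₁) < -δ)
    (hconcp : ∀ j : ℕ, ∃ δ > (0:ℝ), ∀ t : ℝ,
      ∀ x₁ ∈ Set.Icc (-(j:ℝ)) (j:ℝ), ∀ x₂ ∈ Set.Icc (-(j:ℝ)) (j:ℝ), x₁ ≠ x₂ →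
        (gpx t x₂ - gpx t x₁) / (x₂ - x₁) < -δ)
    (amm rmm amp rmp : ℝ → ℝ)
    -- attractor–repeller pair of the past equation
    (hsolam : ∀ t, HasDerivAt amm (gm t (amm t)) t)
    (hsolrm : ∀ t, HasDerivAt rmm (gm t (rmm t)) t)
    (hbddm : ∃ M, ∀ t, |amm t| ≤ M ∧ |rmm t| ≤ M)
    (hsepm : ∃ d > (0:ℝ), ∀ t, d ≤ amm t - rmm t)
    (hhypam : ∃ k ≥ (1:ℝ), ∃ β > (0:ℝ), ∀ s t : ℝ, s ≤ t →
      Real.exp (∫ r in s..t, gmx r (amm r)) ≤ k * Real.exp (-β * (t - s)))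
    (hhyprm : ∃ k ≥ (1:ℝ), ∃ β > (0:ℝ), ∀ s t : ℝ, t ≤ s →
      Real.exp (∫ r in s..t, gmx r (rmm r)) ≤ k * Real.exp (β * (t - s)))
    -- attractor–repeller pair of the future equation
    (hsolap : ∀ t, HasDerivAt amp (gp t (amp t)) t)
    (hsolrp : ∀ t, HasDerivAt rmp (gp t (rmp t)) t)
    (hbddp : ∃ M, ∀ t, |amp t| ≤ M ∧ |rmp t| ≤ M)
    (hsepp : ∃ d > (0:ℝ), ∀ t, d ≤ amp t - rmp t)
    (hhypap : ∃ k ≥ (1:ℝ), ∃ β > (0:ℝ), ∀ s t : ℝ, s ≤ t →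
      Real.exp (∫ r in s..t, gpx r (amp r)) ≤ k * Real.exp (-β * (t - s)))
    (hhyprp : ∃ k ≥ (1:ℝ), ∃ β > (0:ℝ), ∀ s t : ℝ, t ≤ s →
      Real.exp (∫ r in s..t, gpx r (rmp r)) ≤ k * Real.exp (β * (t - s))) :
    (amm t₀ > rmp t₀ →
      ∃ x y : ℝ → ℝ, SwitchSol gm gp t₀ x ∧ SwitchSol gm gp t₀ y ∧
        (∃ M, ∀ t, |x t| ≤ M ∧ |y t| ≤ M) ∧
        (∃ d > (0:ℝ), ∀ t, d ≤ |x t - y t|)) ∧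
    (amm t₀ = rmp t₀ →
      ∃ x : ℝ → ℝ, (SwitchSol gm gp t₀ x ∧ (∃ M, ∀ t, |x t| ≤ M)) ∧
        ∀ y : ℝ → ℝ, SwitchSol gm gp t₀ y → (∃ M, ∀ t, |y t| ≤ M) → y = x) ∧
    (amm t₀ < rmp t₀ →
      ¬ ∃ x : ℝ → ℝ, SwitchSol gm gp t₀ x ∧ (∃ M, ∀ t, |x t| ≤ M)) := by
  exact switching_tracking_criterion' gm gp gmx gpx t₀ hcm hcp hdm hdp hconcm hconcp
    amm rmm amp rmp hsolam hsolrm hbddm hsepm hsolap hsolrp hbddp hsepp
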